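/- arXiv:1611.02335 — 4 statements merged into one kernel-verified Lean document; each statement's English description precedes it below -/
import Mathlib

section
/- Let (η(t))_{t≥0} be a stochastic process on a probability space with almost surely continuous sample paths whose finite-dimensional distributions are centered (mean-zero) Gaussian with covariance Cov(η(s),η(t)) = κ(|s−t|) for a stationary covariance function κ, and assume (A1): (κ(0) − κ(2^{−n}))^{−1} ≥ n^6 for all integers n ≥ 1. Then almost surely lim_{τ→∞} sup_{t≥τ} |η(t) h_d(t)| = 0; in particular, the sample path t ↦ h_d(t) η(t) almost surely belongs to the space 𝒞₀ of continuous functions from [0,∞) to ℝ tending to 0 at infinity. -/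
open MeasureTheory ProbabilityTheory Filter Topology
open scoped ENNReal NNReal

noncomputable section

/-- The function `h_d` of the paper: `h_d(t) = (d+1)/(1+log(1-e^{-1}))` for `t ≤ 1` and
`h_d(t) = (d+1)/(t+log(1-e^{-t}))` for `t > 1`. -/
def hfun (d : ℕ) (t : ℝ) : ℝ :=
  if t ≤ 1 then (d + 1) / (1 + Real.log (1 - Real.exp (-1)))
  else (d + 1) / (t + Real.log (1 - Real.exp (-t)))

/-- `η` is a stochastic process on `(W, P)` with almost surely continuous sample paths on
`[0,∞)`, whose finite-dimensional distributions are centered Gaussian with stationary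
covariance `Cov(η(s), η(t)) = κ(|s-t|)`; the finite-dimensional distributions are encoded by
requiring every finite linear combination `∑ cᵢ η(tᵢ)` to be a centered real Gaussian with
the corresponding variance `∑ᵢ∑ⱼ cᵢ cⱼ κ(|tᵢ-tⱼ|)`. -/
def IsCenteredStationaryGP {W : Type*} [MeasurableSpace W] (P : Measure W)
    (η : ℝ → W → ℝ) (κ : ℝ → ℝ) : Prop :=
  (∀ᵐ w ∂P, ContinuousOn (fun t => η t w) (Set.Ici 0)) ∧
  ∀ (n : ℕ) (t : Fin n → ℝ) (c : Fin n → ℝ), (∀ i, 0 ≤ t i) →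
    Measure.map (fun w => ∑ i, c i * η (t i) w) P =
      gaussianReal 0 (∑ i, ∑ j, c i * c j * κ |t i - t j|).toNNReal

/-- Assumption (A1): `(κ(0) - κ(2^{-n}))⁻¹ ≥ n⁶` for all integers `n ≥ 1`. -/
def AssumptionA1 (κ : ℝ → ℝ) : Prop :=
  ∀ n : ℕ, 1 ≤ n → ((n : ℝ))^6 ≤ (κ 0 - κ ((2:ℝ)^(-(n:ℤ))))⁻¹

namespace GPaux
open Real

/-- The constant `δ = 1 + log(1-e⁻¹) > 0`. -/
def del : ℝ := 1 + Real.log (1 - Real.exp (-1))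

lemma exp_neg_one_lt_half : Real.exp (-1) < 1/2 := by
  have h := Real.exp_one_gt_d9
  rw [Real.exp_neg]
  rw [inv_lt_comm₀ (by positivity) (by norm_num)]
  linarith

lemma del_pos : 0 < del := by
  have h1 : (0:ℝ) < 1 - Real.exp (-1) := by
    linarith [exp_neg_one_lt_half]
  have : (-1 : ℝ) < Real.log (1 - Real.exp (-1)) := by
    rw [Real.lt_log_iff_exp_lt h1]
    linarith [exp_neg_one_lt_half]
  unfold del; linarith

/-- auxiliary denominator -/
def psi (t : ℝ) : ℝ := max t 1 + Real.log (1 - Real.exp (-(max t 1)))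

lemma psi_ge (t : ℝ) : max t 1 - 1 + del ≤ psi t := by
  have h1 : Real.exp (-(max t 1)) ≤ Real.exp (-1) := by
    apply Real.exp_le_exp.2; simp [le_max_right]
  have h2 : (0:ℝ) < 1 - Real.exp (-1) := by linarith [exp_neg_one_lt_half]
  have h3 : Real.log (1 - Real.exp (-1)) ≤ Real.log (1 - Real.exp (-(max t 1))) :=
    Real.log_le_log (by linarith) (by linarith)
  unfold psi del; linarith

lemma psi_pos (t : ℝ) : 0 < psi t := by
  have := psi_ge t
  have : max t 1 - 1 + del ≤ psi t := this
  have h4 : (1:ℝ) ≤ max t 1 := le_max_right _ _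
  linarith [del_pos]

lemma hfun_eq (d : ℕ) (t : ℝ) : hfun d t = (d + 1) / psi t := by
  unfold hfun psi
  split_ifs with h
  · rw [max_eq_right h]
  · rw [max_eq_left (le_of_not_ge h)]

lemma hfun_pos (d : ℕ) (t : ℝ) : 0 < hfun d t := by
  rw [hfun_eq]
  exact div_pos (by positivity) (psi_pos t)

lemma hfun_continuous (d : ℕ) : Continuous (hfun d) := by
  have hmax : Continuous fun t : ℝ => max t 1 := continuous_id.max continuous_const
  have harg : Continuous fun t : ℝ => 1 - Real.exp (-(max t 1)) :=
    continuous_const.sub (hmax.neg.rexp)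
  have hlog : Continuous fun t : ℝ => Real.log (1 - Real.exp (-(max t 1))) := by
    apply Real.continuousOn_log.comp_continuous harg
    intro t
    have h1 : Real.exp (-(max t 1)) ≤ Real.exp (-1) := by
      apply Real.exp_le_exp.2; simp [le_max_right]
    have h2 := exp_neg_one_lt_half
    simp only [Set.mem_compl_iff, Set.mem_singleton_iff]
    intro h; rw [sub_eq_zero] at h; nlinarith
  have hpsi : Continuous psi := hmax.add hlog
  have : Continuous fun t => (d + 1 : ℝ) / psi t :=
    continuous_const.div hpsi (fun t => (psi_pos t).ne')
  simpa only [← hfun_eq] using this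

lemma hfun_le_of_le (d : ℕ) {t : ℝ} {c : ℝ} (hc : 0 < c) (h : c ≤ psi t) :
    hfun d t ≤ (d + 1) / c := by
  rw [hfun_eq]
  apply div_le_div_of_nonneg_left (by positivity) hc h

/-- decay bound: for `k ≤ t`, `hfun d t ≤ (d+1)/(k-1+δ)` (for `k ≥ 1`). -/
lemma hfun_decay (d : ℕ) {t : ℝ} {k : ℝ} (hk : 1 ≤ k) (hkt : k ≤ t) :
    hfun d t ≤ (d + 1) / (k - 1 + del) := by
  apply hfun_le_of_le d (by linarith [del_pos])
  have : k - 1 + del ≤ max t 1 - 1 + del := by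
    have : k ≤ max t 1 := le_trans hkt (le_max_left _ _)
    linarith
  linarith [psi_ge t]



lemma integral_exp_neg_mul_Ioi {r x : ℝ} (hr : 0 < r) :
    ∫ y in Set.Ioi x, Real.exp (-(r * y)) = Real.exp (-(r * x)) / r := by
  have hderiv : ∀ y ∈ Set.Ioi x, HasDerivAt (fun y => -Real.exp (-(r * y)) / r)
      (Real.exp (-(r * y))) y := by
    intro y _
    have h1 : HasDerivAt (fun y : ℝ => -(r * y)) (-r) y := by
      have h := ((hasDerivAt_id y).const_mul r).neg
      rw [mul_one] at h
      exact h
    have h2 : HasDerivAt (fun y : ℝ => Real.exp (-(r * y))) (Real.exp (-(r * y)) * (-r)) y :=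
      (Real.hasDerivAt_exp _).comp y h1
    have h3 := (h2.neg).div_const r
    exact h3.congr_deriv (by rw [mul_neg, neg_neg, mul_div_assoc, div_self hr.ne', mul_one])
  have hint : IntegrableOn (fun y => Real.exp (-(r * y))) (Set.Ioi x) := by
    have := exp_neg_integrableOn_Ioi x hr
    simpa [neg_mul] using this
  have htend : Tendsto (fun y => -Real.exp (-(r * y)) / r) atTop (𝓝 0) := by
    have h1 : Tendsto (fun y : ℝ => -(r * y)) atTop atBot := by
      apply Filter.tendsto_neg_atBot_iff.2
      exact Tendsto.const_mul_atTop hr tendsto_id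
    have h2 : Tendsto (fun y : ℝ => Real.exp (-(r * y))) atTop (𝓝 0) :=
      Real.tendsto_exp_atBot.comp h1
    have := (h2.neg).div_const r
    simpa using this
  have hcont : ContinuousWithinAt (fun y => -Real.exp (-(r * y)) / r) (Set.Ici x) x := by
    apply Continuous.continuousWithinAt
    continuity
  have := integral_Ioi_of_hasDerivAt_of_tendsto hcont hderiv hint htend
  rw [this]
  field_simp
  ring

lemma gaussian_tail {v : ℝ≥0} {b x : ℝ} (hb : 0 < b) (hvb : (v:ℝ) ≤ b) (hx : 0 < x)
    (hbx : b ≤ x^2) :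
    gaussianReal 0 v {y | x ≤ |y|} ≤ ENNReal.ofReal (2 * Real.exp (-x^2/(2*b))) := by
  rcases eq_or_ne v 0 with hv | hv
  · subst hv
    rw [gaussianReal_zero_var]
    have hs : MeasurableSet {y : ℝ | x ≤ |y|} :=
      measurableSet_le measurable_const measurable_abs
    rw [Measure.dirac_apply' _ hs]
    rw [Set.indicator_of_notMem]
    · exact zero_le
    · simp only [Set.mem_setOf_eq, abs_zero, not_le]; exact hx
  · have hvpos : (0:ℝ) < v := by positivity
    set μ := gaussianReal 0 v with hμ
    -- step C : one-sided bound
    have hIci : μ (Set.Ici x) ≤ ENNReal.ofReal (Real.exp (-x^2/(2*(v:ℝ)))) := by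
      set r : ℝ := x / v with hr
      have hrpos : 0 < r := by positivity
      set c : ℝ := (Real.sqrt (2 * π * v))⁻¹ with hc
      have hcpos : 0 < c := by
        rw [hc]
        have : (0:ℝ) < 2 * π * v := by positivity
        positivity
      set C : ℝ := c * Real.exp (x^2/(2*(v:ℝ))) with hC
      have hCpos : 0 < C := by positivity
      have hpt : ∀ y ∈ Set.Ici x, gaussianPDFReal 0 v y ≤ C * Real.exp (-(r * y)) := by
        intro y _
        unfold gaussianPDFReal
        rw [hC]
        have hexp : Real.exp (-(y - 0)^2/(2*(v:ℝ)))
            ≤ Real.exp (x^2/(2*(v:ℝ))) * Real.exp (-(r * y)) := by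
          rw [← Real.exp_add, Real.exp_le_exp]
          have key : -(y - 0)^2 / (2*(v:ℝ)) ≤ (x^2 - 2*x*y) / (2*(v:ℝ)) := by
            have h2v : (0:ℝ) < 2*(v:ℝ) := by positivity
            gcongr
            nlinarith [sq_nonneg (x - y)]
          calc -(y - 0)^2 / (2*(v:ℝ)) ≤ (x^2 - 2*x*y) / (2*(v:ℝ)) := key
            _ = x^2/(2*(v:ℝ)) + -(r * y) := by rw [hr]; field_simp; ring
        calc c * Real.exp (-(y-0)^2/(2*(v:ℝ))) ≤
            c * (Real.exp (x^2/(2*(v:ℝ))) * Real.exp (-(r * y))) := by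
              exact mul_le_mul_of_nonneg_left hexp (le_of_lt hcpos)
          _ = c * Real.exp (x^2/(2*(v:ℝ))) * Real.exp (-(r * y)) := by ring
      have h1 : μ (Set.Ici x) = ∫⁻ y in Set.Ici x, ENNReal.ofReal (gaussianPDFReal 0 v y) := by
        rw [hμ, gaussianReal_apply _ hv]
        rfl
      have h2 : ∫⁻ y in Set.Ici x, ENNReal.ofReal (gaussianPDFReal 0 v y)
          ≤ ∫⁻ y in Set.Ici x, ENNReal.ofReal (C * Real.exp (-(r * y))) := by
        apply setLIntegral_mono
        · apply Measurable.ennreal_ofReal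
          exact (measurable_id.const_mul r).neg.exp.const_mul C
        · intro y hy
          exact ENNReal.ofReal_le_ofReal (hpt y hy)
      have hint : IntegrableOn (fun y => C * Real.exp (-(r * y))) (Set.Ici x) := by
        have h0 : IntegrableOn (fun y => Real.exp (-(r * y))) (Set.Ioi x) := by
          simpa [neg_mul] using exp_neg_integrableOn_Ioi x hrpos
        have h0' : IntegrableOn (fun y => Real.exp (-(r * y))) (Set.Ici x) := by
          rwa [integrableOn_Ici_iff_integrableOn_Ioi]
        exact h0'.const_mul C
      have h3 : ∫⁻ y in Set.Ici x, ENNReal.ofReal (C * Real.exp (-(r * y)))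
          = ENNReal.ofReal (∫ y in Set.Ici x, C * Real.exp (-(r * y))) := by
        rw [ofReal_integral_eq_lintegral_ofReal hint]
        exact Filter.Eventually.of_forall fun y => by positivity
      have h4 : ∫ y in Set.Ici x, C * Real.exp (-(r * y)) = C * (Real.exp (-(r*x)) / r) := by
        rw [integral_Ici_eq_integral_Ioi, integral_const_mul, integral_exp_neg_mul_Ioi hrpos]
      have h5 : C * (Real.exp (-(r*x)) / r) ≤ Real.exp (-x^2/(2*(v:ℝ))) := by
        have hexpeq : Real.exp (x^2/(2*(v:ℝ))) * Real.exp (-(r*x))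
            = Real.exp (-x^2/(2*(v:ℝ))) := by
          rw [← Real.exp_add]
          congr 1
          rw [hr]; field_simp; ring
        have hrx : Real.exp (-(r*x)) / r = Real.exp (-(r*x)) * ((v:ℝ)/x) := by
          rw [hr]; field_simp
        rw [hC, hrx]
        have : c * Real.exp (x ^ 2 / (2 * ↑v)) * (Real.exp (-(r * x)) * (↑v / x))
            = (c * ((v:ℝ)/x)) * Real.exp (-x^2/(2*(v:ℝ))) := by
          rw [← hexpeq]; ring
        rw [this]
        have hcv : c * ((v:ℝ)/x) ≤ 1 := by
          rw [hc]
          have hsq : Real.sqrt (v:ℝ) ≤ x := by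
            have : Real.sqrt (v:ℝ) ≤ Real.sqrt (x^2) := Real.sqrt_le_sqrt (le_trans hvb hbx)
            rwa [Real.sqrt_sq hx.le] at this
          have h2pi : Real.sqrt (v:ℝ) ≤ Real.sqrt (2*π*v) := by
            apply Real.sqrt_le_sqrt
            nlinarith [Real.pi_gt_three, hvpos]
          have hs2 : (0:ℝ) < Real.sqrt (2*π*v) := by
            apply Real.sqrt_pos.2; positivity
          rw [inv_mul_le_iff₀ hs2, mul_one, div_le_iff₀ hx]
          calc (v:ℝ) = Real.sqrt v * Real.sqrt v := by
                rw [Real.mul_self_sqrt (by positivity)]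
            _ ≤ Real.sqrt (2*π*v) * x := by
                exact mul_le_mul h2pi hsq (Real.sqrt_nonneg _) hs2.le
        nlinarith [Real.exp_pos (-x^2/(2*(v:ℝ)))]
      calc μ (Set.Ici x) ≤ ENNReal.ofReal (∫ y in Set.Ici x, C * Real.exp (-(r * y))) := by
            rw [h1]; exact le_trans h2 (le_of_eq h3)
        _ ≤ ENNReal.ofReal (Real.exp (-x^2/(2*(v:ℝ)))) := by
            apply ENNReal.ofReal_le_ofReal; rw [h4]; exact h5
    -- step B : symmetry
    have hsym : μ (Set.Iic (-x)) = μ (Set.Ici x) := by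
      have hmap : μ.map (fun y => (-1 : ℝ) * y) = μ := by
        rw [hμ, gaussianReal_map_const_mul]
        have h1 : (⟨(-1:ℝ)^2, sq_nonneg _⟩ : ℝ≥0) = 1 := by ext; norm_num
        congr 1
        · norm_num
        · ext; norm_num
      have h2 : μ.map (fun y => (-1:ℝ) * y) (Set.Ici x) = μ (Set.Iic (-x)) := by
        rw [Measure.map_apply (by fun_prop : Measurable fun y : ℝ => (-1:ℝ) * y) measurableSet_Ici]
        congr 1
        ext y
        simp only [Set.mem_preimage, Set.mem_Ici, Set.mem_Iic]
        constructor <;> intro h <;> linarith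
      rw [← h2, hmap]
    -- combine
    have hsub : {y : ℝ | x ≤ |y|} ⊆ Set.Iic (-x) ∪ Set.Ici x := by
      intro y hy
      simp only [Set.mem_setOf_eq] at hy
      rcases abs_cases y with ⟨h1, _⟩ | ⟨h1, _⟩
      · right; rw [Set.mem_Ici]; linarith
      · left; rw [Set.mem_Iic]; linarith
    calc μ {y : ℝ | x ≤ |y|} ≤ μ (Set.Iic (-x) ∪ Set.Ici x) := measure_mono hsub
      _ ≤ μ (Set.Iic (-x)) + μ (Set.Ici x) := measure_union_le _ _
      _ = μ (Set.Ici x) + μ (Set.Ici x) := by rw [hsym]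
      _ ≤ ENNReal.ofReal (Real.exp (-x^2/(2*(v:ℝ)))) + ENNReal.ofReal (Real.exp (-x^2/(2*(v:ℝ)))) :=
          add_le_add hIci hIci
      _ = ENNReal.ofReal (2 * Real.exp (-x^2/(2*(v:ℝ)))) := by
          rw [← ENNReal.ofReal_add (by positivity) (by positivity)]; ring_nf
      _ ≤ ENNReal.ofReal (2 * Real.exp (-x^2/(2*b))) := by
          apply ENNReal.ofReal_le_ofReal
          have : -x^2/(2*(v:ℝ)) ≤ -x^2/(2*b) := by
            rw [neg_div, neg_div, neg_le_neg_iff]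
            apply div_le_div_of_nonneg_left (by positivity) (by positivity) (by linarith)
          nlinarith [Real.exp_le_exp.2 this]
  

lemma sum_inv_sq_le (M : ℕ) : ∑ i ∈ Finset.range M, (1:ℝ)/((i:ℝ)+1)^2 ≤ 2 := by
  have key : ∀ M : ℕ, 1 ≤ M → ∑ i ∈ Finset.range M, (1:ℝ)/((i:ℝ)+1)^2 ≤ 2 - 1/(M:ℝ) := by
    intro M hM
    induction M with
    | zero => omega
    | succ n ih =>
      rcases Nat.eq_or_lt_of_le hM with h | h
      · simp [← h]
        norm_num
      · have hn : 1 ≤ n := by omega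
        rw [Finset.sum_range_succ]
        have h1 := ih hn
        have hnp : (0:ℝ) < n := by positivity
        have hstep : (1:ℝ)/((n:ℝ)+1)^2 ≤ 1/(n:ℝ) - 1/((n:ℝ)+1) := by
          rw [div_sub_div _ _ (by positivity) (by positivity)]
          rw [div_le_div_iff₀ (by positivity) (by positivity)]
          ring_nf
          nlinarith
        push_cast
        linarith
  rcases Nat.eq_zero_or_pos M with h | h
  · simp [h]
  · have := key M h
    have : (0:ℝ) < M := by exact_mod_cast h
    linarith [key M h, one_div_pos.2 this]

/-- dyadic chaining: increments at adjacent dyadics control everything. -/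
lemma dyadic_chain (f : ℝ → ℝ) (a : ℝ) (ha : 0 ≤ a) (hf : ContinuousOn f (Set.Ici 0))
    (ε : ℕ → ℝ) (hε : ∀ m, 0 ≤ ε m) (S : ℝ)
    (hS : ∀ M : ℕ, ∑ i ∈ Finset.range M, ε (i+1) ≤ S)
    (h : ∀ m : ℕ, 1 ≤ m → ∀ j : ℕ, j < 2^m →
      |f (a + ((j:ℝ)+1)/2^m) - f (a + (j:ℝ)/2^m)| ≤ ε m) :
    ∀ t ∈ Set.Ico a (a+1), |f t - f a| ≤ S := by
  -- Step 1 : dyadic points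
  have step1 : ∀ m : ℕ, ∀ j : ℕ, j < 2^m →
      |f (a + (j:ℝ)/2^m) - f a| ≤ ∑ i ∈ Finset.range m, ε (i+1) := by
    intro m
    induction m with
    | zero =>
      intro j hj
      interval_cases j
      simp
    | succ n ih =>
      intro j hj
      set j' := j / 2 with hj'
      have hj'lt : j' < 2^n := by
        rw [hj']
        apply Nat.div_lt_of_lt_mul
        have h2 : 2 * 2^n = 2^(n+1) := by rw [pow_succ]; ring
        rw [h2]
        exact hj
      have ihj := ih j' hj'lt
      rcases Nat.even_or_odd j with he | ho
      · -- j = 2 j'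
        obtain ⟨r, hr⟩ := he
        have hjeq : j = 2 * j' := by
          rw [hj']
          omega
        have hpt : a + (j:ℝ)/2^(n+1) = a + (j':ℝ)/2^n := by
          rw [hjeq]
          push_cast
          congr 1
          rw [pow_succ]
          field_simp
        rw [hpt, Finset.sum_range_succ]
        linarith [hε (n+1)]
      · -- j = 2 j' + 1
        obtain ⟨r, hr⟩ := ho
        have hjeq : j = 2 * j' + 1 := by
          rw [hj']
          omega
        have hq : a + ((2*j':ℝ))/2^(n+1) = a + (j':ℝ)/2^n := by
          congr 1
          rw [pow_succ]
          field_simp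
        have hincr := h (n+1) (by omega) (2*j') (by omega)
        have hpt : a + (j:ℝ)/2^(n+1) = a + ((2*j':ℝ)+1)/2^(n+1) := by
          rw [hjeq]; push_cast; ring_nf
        rw [hpt, Finset.sum_range_succ]
        have htri : |f (a + ((2*j':ℝ)+1)/2^(n+1)) - f a| ≤
            |f (a + ((2*j':ℝ)+1)/2^(n+1)) - f (a + ((2*j':ℝ))/2^(n+1))|
            + |f (a + ((2*j':ℝ))/2^(n+1)) - f a| := abs_sub_le _ _ _
        rw [hq] at htri
        have : |f (a + ((2*j':ℝ)+1)/2^(n+1)) - f (a + (2*j':ℝ)/2^(n+1))| ≤ ε (n+1) := by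
          have := hincr
          push_cast at this ⊢
          convert this using 4 <;> ring
        rw [hq] at this
        linarith
  -- Step 2 : general points via continuity
  intro t ht
  obtain ⟨hta, htb⟩ := ht
  set p : ℕ → ℝ := fun m => a + (⌊(t - a) * 2^m⌋₊ : ℝ)/2^m with hp
  have hjlt : ∀ m : ℕ, ⌊(t - a) * 2^m⌋₊ < 2^m := by
    intro m
    apply (Nat.floor_lt (mul_nonneg (by linarith) (by positivity))).2
    push_cast
    have h2 : (0:ℝ) < 2^m := by positivity
    nlinarith
  have hbound : ∀ m, |f (p m) - f a| ≤ S := by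
    intro m
    exact le_trans (step1 m _ (hjlt m)) (hS m)
  have hfl : ∀ m : ℕ, (⌊(t - a) * 2^m⌋₊ : ℝ) ≤ (t - a) * 2^m :=
    fun m => Nat.floor_le (mul_nonneg (by linarith) (by positivity))
  have hfl2 : ∀ m : ℕ, (t - a) * 2^m < ⌊(t - a) * 2^m⌋₊ + 1 :=
    fun m => Nat.lt_floor_add_one _
  have hple : ∀ m, p m ∈ Set.Icc a t := by
    intro m
    have h2 : (0:ℝ) < 2^m := by positivity
    constructor
    · have : (0:ℝ) ≤ (⌊(t - a) * 2^m⌋₊ : ℝ)/2^m := by positivity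
      rw [hp]; simp only; linarith
    · rw [hp]; simp only
      rw [← sub_nonneg]
      have h1 := hfl m
      have : (⌊(t - a) * 2^m⌋₊ : ℝ)/2^m ≤ t - a := by
        rw [div_le_iff₀ h2]; exact h1
      linarith
  have hptend : Tendsto p atTop (𝓝 t) := by
    have hd : ∀ m, |p m - t| ≤ (1/2:ℝ)^m := by
      intro m
      have h2 : (0:ℝ) < 2^m := by positivity
      have h1 := hfl m
      have h1' := hfl2 m
      have e1 : (1/2:ℝ)^m = 1/2^m := by rw [div_pow, one_pow]
      have hpow : (0:ℝ) < 1/2^m := by positivity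
      have hq : t - a - 1/2^m ≤ (⌊(t - a) * 2^m⌋₊ : ℝ)/2^m := by
        rw [sub_le_iff_le_add, ← add_div, le_div_iff₀ h2]
        linarith
      have hq2 : (⌊(t - a) * 2^m⌋₊ : ℝ)/2^m ≤ t - a := by
        rw [div_le_iff₀ h2]
        exact h1
      rw [abs_le, e1]
      constructor
      · simp only [hp]; linarith
      · simp only [hp]; linarith
    have h0 : Tendsto (fun m : ℕ => (1/2:ℝ)^m) atTop (𝓝 0) := by
      apply tendsto_pow_atTop_nhds_zero_of_lt_one <;> norm_num
    have : Tendsto (fun m => p m - t) atTop (𝓝 0) := by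
      apply squeeze_zero_norm hd h0
    have := this.add_const t
    simpa using this
  have hcw : ContinuousWithinAt f (Set.Ici 0) t := hf t (le_trans ha hta)
  have hfp : Tendsto (fun m => f (p m)) atTop (𝓝 (f t)) := by
    apply hcw.tendsto.comp
    apply tendsto_nhdsWithin_of_tendsto_nhds_of_eventually_within _ hptend
    apply Filter.Eventually.of_forall
    intro m
    exact le_trans ha (hple m).1
  have : Tendsto (fun m => |f (p m) - f a|) atTop (𝓝 (|f t - f a|)) :=
    ((hfp.sub tendsto_const_nhds).abs)
  exact le_of_tendsto' this hbound


variable {W : Type*} [MeasurableSpace W] {P : Measure W} {η : ℝ → W → ℝ} {κ : ℝ → ℝ}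

lemma law_point (hGP : IsCenteredStationaryGP P η κ) {s : ℝ} (hs : 0 ≤ s) :
    Measure.map (fun w => η s w) P = gaussianReal 0 (κ 0).toNNReal := by
  have h := hGP.2 1 ![s] ![1] (by intro i; fin_cases i; exact hs)
  have hfeq : (fun w => ∑ i : Fin 1, ![(1:ℝ)] i * η (![s] i) w) = fun w => η s w := by
    funext w; simp
  have hveq : (∑ i : Fin 1, ∑ j : Fin 1, ![(1:ℝ)] i * ![(1:ℝ)] j * κ |![s] i - ![s] j|) = κ 0 := by
    simp
  rw [hfeq, hveq] at h
  exact h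

lemma law_incr (hGP : IsCenteredStationaryGP P η κ) {s u : ℝ} (hs : 0 ≤ s) (hu : 0 ≤ u) :
    Measure.map (fun w => η s w - η u w) P
      = gaussianReal 0 (2 * (κ 0 - κ |s - u|)).toNNReal := by
  have h := hGP.2 2 ![s, u] ![1, -1] (by intro i; fin_cases i <;> simpa)
  have hfeq : (fun w => ∑ i : Fin 2, ![(1:ℝ), -1] i * η (![s, u] i) w)
      = fun w => η s w - η u w := by
    funext w; simp [Fin.sum_univ_two]; ring
  have hveq : (∑ i : Fin 2, ∑ j : Fin 2, ![(1:ℝ),-1] i * ![(1:ℝ),-1] j * κ |![s,u] i - ![s,u] j|)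
      = 2 * (κ 0 - κ |s - u|) := by
    simp [Fin.sum_univ_two, abs_sub_comm u s]
    ring
  rw [hfeq, hveq] at h
  exact h

lemma aemeas_of_map_eq_gaussian {f : W → ℝ} {m : ℝ} {v : ℝ≥0}
    (h : Measure.map f P = gaussianReal m v) : AEMeasurable f P := by
  by_contra hc
  rw [Measure.map_of_not_aemeasurable hc] at h
  have h2 := congrArg (fun μ : Measure ℝ => μ Set.univ) h
  simp only [Measure.coe_zero, Pi.zero_apply, measure_univ] at h2
  exact zero_ne_one h2

lemma prob_tail {f : W → ℝ} {v : ℝ≥0} (h : Measure.map f P = gaussianReal 0 v)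
    {b x : ℝ} (hb : 0 < b) (hvb : (v:ℝ) ≤ b) (hx : 0 < x) (hbx : b ≤ x^2) :
    P {w | x ≤ |f w|} ≤ ENNReal.ofReal (2 * Real.exp (-x^2/(2*b))) := by
  have hae := aemeas_of_map_eq_gaussian h
  have hmset : MeasurableSet {y : ℝ | x ≤ |y|} :=
    measurableSet_le measurable_const measurable_abs
  have h2 := Measure.map_apply_of_aemeasurable hae hmset
  rw [h] at h2
  calc P {w | x ≤ |f w|} = gaussianReal 0 v {y | x ≤ |y|} := by rw [h2]; rfl
    _ ≤ _ := gaussian_tail hb hvb hx hbx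

end GPaux

set_option maxHeartbeats 1000000

/-- Under (A1), almost surely `sup_{t ≥ τ} |η(t) h_d(t)| → 0` as `τ → ∞`; in particular the
sample path `t ↦ h_d(t) η(t)` almost surely belongs to `𝒞₀`, i.e. it is continuous on `[0,∞)`
and tends to `0` at infinity. -/
theorem gp_weighted_path_vanishes_at_infinity
    {d : ℕ} (hd1 : 1 ≤ d)
    {W : Type*} [MeasurableSpace W] (P : Measure W) [IsProbabilityMeasure P]
    (η : ℝ → W → ℝ) (κ : ℝ → ℝ)
    (hGP : IsCenteredStationaryGP P η κ)
    (hA1 : AssumptionA1 κ) :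
    ∀ᵐ w ∂P,
      (Tendsto (fun τ : ℝ => ⨆ t : {s : ℝ // τ ≤ s}, (‖η (t : ℝ) w * hfun d (t : ℝ)‖₊ : ℝ≥0∞))
        atTop (𝓝 0)) ∧
      ContinuousOn (fun t => hfun d t * η t w) (Set.Ici 0) ∧
      Tendsto (fun t => hfun d t * η t w) atTop (𝓝 0) := by
  have hcont := hGP.1
  -- constants
  set v0 : ℝ≥0 := (κ 0).toNNReal with hv0
  set b0 : ℝ := (v0:ℝ) + 1 with hb0def
  have hb0 : 0 < b0 := by positivity
  set L : ℕ → ℝ := fun k => Real.log ((k:ℝ)+2) with hLdef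
  have hlog2L : ∀ k : ℕ, Real.log 2 ≤ L k := by
    intro k
    apply Real.log_le_log (by norm_num)
    push_cast
    linarith [Nat.cast_nonneg (α := ℝ) k]
  have hL4 : ∀ k : ℕ, (1/4:ℝ) ≤ L k := by
    intro k
    linarith [Real.log_two_gt_d9, hlog2L k]
  have hLpos : ∀ k : ℕ, (0:ℝ) < L k := fun k => lt_of_lt_of_le (by norm_num) (hL4 k)
  -- consequences of (A1)
  have hA1' : ∀ m : ℕ, 1 ≤ m → 0 < κ 0 - κ (1/2^m) ∧ κ 0 - κ (1/2^m) ≤ 1/(m:ℝ)^6 := by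
    intro m hm
    have h := hA1 m hm
    have heq : (2:ℝ)^(-(m:ℤ)) = 1/2^m := by
      rw [zpow_neg, zpow_natCast, one_div]
    rw [heq] at h
    have hmR : (1:ℝ) ≤ (m:ℝ) := by exact_mod_cast hm
    have hm6 : (0:ℝ) < (m:ℝ)^6 := by positivity
    have hypos : 0 < κ 0 - κ (1/2^m) := by
      by_contra hc
      push_neg at hc
      have h2 : (κ 0 - κ (1/2^m))⁻¹ ≤ 0 := inv_nonpos.2 hc
      linarith
    refine ⟨hypos, ?_⟩
    rw [le_div_iff₀ hm6]
    have h3 := mul_le_mul_of_nonneg_left h hypos.le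
    rw [mul_inv_cancel₀ hypos.ne'] at h3
    linarith
  -- single-point tail events
  set E1 : ℕ → Set W := fun k =>
    {w | 2*Real.sqrt b0*Real.sqrt (L k) ≤ |η (k:ℝ) w|} with hE1def
  have hE1bound : ∀ k : ℕ,
      P (E1 k) ≤ ENNReal.ofReal (2 * Real.exp (-(2 * L k))) := by
    intro k
    have hlaw := GPaux.law_point hGP (s := (k:ℝ)) (Nat.cast_nonneg k)
    rw [← hv0] at hlaw
    have hsb : (0:ℝ) < Real.sqrt b0 := Real.sqrt_pos.2 hb0
    have hsL : (0:ℝ) < Real.sqrt (L k) := Real.sqrt_pos.2 (hLpos k)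
    have hx : (0:ℝ) < 2*Real.sqrt b0*Real.sqrt (L k) := by positivity
    have hx2 : (2*Real.sqrt b0*Real.sqrt (L k))^2 = 4 * b0 * L k := by
      rw [mul_pow, mul_pow, Real.sq_sqrt hb0.le, Real.sq_sqrt (hLpos k).le]
      norm_num
    have hvb : (v0:ℝ) ≤ b0 := by rw [hb0def]; linarith
    have hbx : b0 ≤ (2*Real.sqrt b0*Real.sqrt (L k))^2 := by
      rw [hx2]; nlinarith [hL4 k]
    have hb := GPaux.prob_tail hlaw hb0 hvb hx hbx
    have hexp : -(2*Real.sqrt b0*Real.sqrt (L k))^2/(2*b0) = -(2 * L k) := by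
      rw [hx2]; field_simp; ring
    rw [hexp] at hb
    rw [hE1def]
    exact hb
  have hE1sum : (∑' k, P (E1 k)) ≠ ⊤ := by
    have hsummand : ∀ k : ℕ, 2 * Real.exp (-(2 * L k)) = 2 * (1/((k:ℝ)+2))^2 := by
      intro k
      congr 1
      rw [show -(2*L k) = -(L k) + -(L k) by ring, Real.exp_add, Real.exp_neg, hLdef]
      rw [Real.exp_log (by positivity)]
      ring
    have hsummable : Summable (fun k : ℕ => 2 * Real.exp (-(2 * L k))) := by
      apply Summable.congr ?_ (fun k => (hsummand k).symm)
      have h1 : Summable (fun n : ℕ => 1/((n:ℝ))^2) := Real.summable_one_div_nat_pow.2 (by norm_num)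
      have h2 : Summable (fun k : ℕ => 1/(((k+2:ℕ)):ℝ)^2) := (summable_nat_add_iff (f := fun n : ℕ => 1/((n:ℝ))^2) 2).2 h1
      have h3 : (fun k : ℕ => 2 * (1/((k:ℝ)+2))^2) = fun k : ℕ => 2 * (1/(((k+2:ℕ)):ℝ)^2) := by
        funext k; push_cast; rw [one_div, one_div, inv_pow]
      rw [h3]
      exact h2.mul_left 2
    have hle := ENNReal.tsum_le_tsum hE1bound
    rw [← ENNReal.ofReal_tsum_of_nonneg (fun k => by positivity) hsummable] at hle
    exact ne_top_of_le_ne_top ENNReal.ofReal_ne_top hle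
  have hBC1 : ∀ᵐ w ∂P, ∀ᶠ k in atTop, w ∉ E1 k := MeasureTheory.ae_eventually_notMem hE1sum
  -- increment events
  set E2 : ℕ × ℕ × ℕ → Set W := fun p =>
    if 1 ≤ p.2.1 ∧ p.2.2 < 2^p.2.1 then
      {w | 4/((p.2.1:ℝ))^2 * Real.sqrt (L p.1) ≤
        |η ((p.1:ℝ) + ((p.2.2:ℝ)+1)/2^p.2.1) w - η ((p.1:ℝ) + (p.2.2:ℝ)/2^p.2.1) w|}
    else ∅ with hE2def
  have hE2bound : ∀ k m j : ℕ, 1 ≤ m → j < 2^m →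
      P (E2 (k,m,j)) ≤ ENNReal.ofReal (2 * Real.exp (-(4*(m:ℝ)^2 * L k))) := by
    intro k m j hm hj
    have hmR : (1:ℝ) ≤ (m:ℝ) := by exact_mod_cast hm
    have hmpos : (0:ℝ) < (m:ℝ) := by linarith
    have hspos : (0:ℝ) ≤ (k:ℝ) + ((j:ℝ)+1)/2^m := by positivity
    have hupos : (0:ℝ) ≤ (k:ℝ) + (j:ℝ)/2^m := by positivity
    have hlaw := GPaux.law_incr hGP hspos hupos
    have habs : |((k:ℝ) + ((j:ℝ)+1)/2^m) - ((k:ℝ) + (j:ℝ)/2^m)| = 1/2^m := by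
      have h1 : ((k:ℝ) + ((j:ℝ)+1)/2^m) - ((k:ℝ) + (j:ℝ)/2^m) = 1/2^m := by
        field_simp
        ring
      rw [h1, abs_of_pos (by positivity)]
    rw [habs] at hlaw
    obtain ⟨hy1, hy2⟩ := hA1' m hm
    have hsL : (0:ℝ) < Real.sqrt (L k) := Real.sqrt_pos.2 (hLpos k)
    have hbpos : (0:ℝ) < 2/(m:ℝ)^6 := by positivity
    have hvb : (((2 * (κ 0 - κ (1/2^m))).toNNReal : ℝ≥0) : ℝ) ≤ 2/(m:ℝ)^6 := by
      rw [Real.coe_toNNReal']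
      apply max_le ?_ hbpos.le
      have h26 : 2/(m:ℝ)^6 = 2 * (1/(m:ℝ)^6) := by ring
      rw [h26]
      linarith
    have hx : (0:ℝ) < 4/((m:ℝ))^2 * Real.sqrt (L k) := by positivity
    have hx2 : (4/((m:ℝ))^2 * Real.sqrt (L k))^2 = 16/(m:ℝ)^4 * L k := by
      rw [mul_pow, div_pow, Real.sq_sqrt (hLpos k).le, ← pow_mul]
      norm_num
    have hbx : 2/(m:ℝ)^6 ≤ (4/((m:ℝ))^2 * Real.sqrt (L k))^2 := by
      rw [hx2]
      have hm2 : (1:ℝ) ≤ (m:ℝ)^2 := by nlinarith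
      rw [div_mul_eq_mul_div, div_le_div_iff₀ (by positivity) (by positivity)]
      have c1 : 4*(m:ℝ)^6 ≤ 16*L k*(m:ℝ)^6 := by nlinarith [hL4 k, pow_pos hmpos 6]
      have c2 : 2*(m:ℝ)^4 ≤ 4*(m:ℝ)^6 := by
        nlinarith [pow_pos hmpos 4, mul_le_mul_of_nonneg_left hm2 (le_of_lt (pow_pos hmpos 4))]
      linarith
    have hb := GPaux.prob_tail hlaw hbpos hvb hx hbx
    have hexp : -(4/((m:ℝ))^2 * Real.sqrt (L k))^2/(2*(2/(m:ℝ)^6)) = -(4*(m:ℝ)^2 * L k) := by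
      rw [hx2]; field_simp; ring
    rw [hexp] at hb
    rw [hE2def]
    simp only
    rw [if_pos ⟨hm, hj⟩]
    exact hb
  -- sum over the triple-indexed events
  have hE2empty : ∀ k m j : ℕ, ¬(1 ≤ m ∧ j < 2^m) → E2 (k,m,j) = ∅ := by
    intro k m j hc
    rw [hE2def]
    exact if_neg hc
  have hinner : ∀ k m : ℕ, (∑' j : ℕ, P (E2 (k,m,j)))
      ≤ ENNReal.ofReal (2/((k:ℝ)+2)^2) * (2:ℝ≥0∞)⁻¹^m := by
    intro k m
    rcases Nat.eq_zero_or_pos m with hm0 | hm1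
    · subst hm0
      have : ∀ j : ℕ, P (E2 (k,0,j)) = 0 := by
        intro j
        rw [hE2empty k 0 j (by omega)]
        simp
      simp only [this, tsum_zero]
      exact zero_le
    · set B : ℝ≥0∞ := ENNReal.ofReal (2 * Real.exp (-(4*(m:ℝ)^2 * L k))) with hBdef
      have h1 : (∑' j : ℕ, P (E2 (k,m,j))) ≤ ((2^m : ℕ) : ℝ≥0∞) * B := by
        calc (∑' j : ℕ, P (E2 (k,m,j)))
            ≤ ∑' j : ℕ, (if j < 2^m then B else 0) := by
              apply ENNReal.tsum_le_tsum
              intro j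
              by_cases hj : j < 2^m
              · rw [if_pos hj]
                exact hE2bound k m j hm1 hj
              · rw [if_neg hj, hE2empty k m j (by tauto)]
                simp
          _ = ∑ j ∈ Finset.range (2^m), (if j < 2^m then B else 0) := by
              apply tsum_eq_sum
              intro j hj
              rw [if_neg (by simpa using hj)]
          _ = ∑ j ∈ Finset.range (2^m), B :=
              Finset.sum_congr rfl (fun j hj => if_pos (Finset.mem_range.1 hj))
          _ = ((2^m : ℕ) : ℝ≥0∞) * B := by
              rw [Finset.sum_const, Finset.card_range, nsmul_eq_mul]
      have hmR : (1:ℝ) ≤ (m:ℝ) := by exact_mod_cast hm1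
      have hLk := hLpos k
      have hkpos : (0:ℝ) < ((k:ℝ)+2)^2 := by positivity
      have hreal : ((2:ℝ)^m) * (2 * Real.exp (-(4*(m:ℝ)^2 * L k)))
          ≤ 2/((k:ℝ)+2)^2 * (1/2:ℝ)^m := by
        have hLk2 : Real.exp (L k) = (k:ℝ)+2 := by
          rw [hLdef]; exact Real.exp_log (by positivity)
        have e1 : (2:ℝ)^m = Real.exp ((m:ℝ) * Real.log 2) := by
          rw [Real.exp_nat_mul, Real.exp_log (by norm_num : (0:ℝ) < 2)]
        have e2 : ((k:ℝ)+2)^2 = Real.exp (L k) * Real.exp (L k) := by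
          rw [hLk2]; ring
        have key : (2:ℝ)^m * 2^m * ((k:ℝ)+2)^2 * Real.exp (-(4*(m:ℝ)^2 * L k)) ≤ 1 := by
          rw [e1, e2]
          simp only [← Real.exp_add]
          rw [Real.exp_le_one_iff]
          have f1 : 2*(m:ℝ)*Real.log 2 ≤ 2*(m:ℝ)*L k := by
            apply mul_le_mul_of_nonneg_left (hlog2L k) (by linarith)
          have f2 : (2*(m:ℝ)+2) * L k ≤ 4*(m:ℝ)^2 * L k := by
            apply mul_le_mul_of_nonneg_right ?_ hLk.le
            nlinarith
          nlinarith
        have h2m : (0:ℝ) < 2^m := by positivity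
        rw [div_pow, one_pow, div_mul_div_comm, mul_one]
        rw [le_div_iff₀ (by positivity)]
        calc (2:ℝ)^m * (2 * Real.exp (-(4*(m:ℝ)^2 * L k))) * (((k:ℝ)+2)^2 * 2^m)
            = 2 * ((2:ℝ)^m * 2^m * ((k:ℝ)+2)^2 * Real.exp (-(4*(m:ℝ)^2 * L k))) := by ring
          _ ≤ 2 := by linarith [key]
      have hcast0 : ((2^m : ℕ) : ℝ≥0∞) = ENNReal.ofReal ((2:ℝ)^m) := by
        rw [ENNReal.ofReal_pow (by norm_num : (0:ℝ) ≤ 2)]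
        push_cast
        norm_num
      have hcast1 : ((2^m : ℕ) : ℝ≥0∞) * B
          = ENNReal.ofReal ((2:ℝ)^m * (2 * Real.exp (-(4*(m:ℝ)^2 * L k)))) := by
        rw [ENNReal.ofReal_mul (by positivity : (0:ℝ) ≤ (2:ℝ)^m), hcast0, hBdef]
      have hcast2 : ENNReal.ofReal (2/((k:ℝ)+2)^2 * (1/2:ℝ)^m)
          = ENNReal.ofReal (2/((k:ℝ)+2)^2) * (2:ℝ≥0∞)⁻¹^m := by
        rw [ENNReal.ofReal_mul (by positivity), ENNReal.ofReal_pow (by norm_num : (0:ℝ) ≤ 1/2)]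
        congr 2
        rw [ENNReal.ofReal_div_of_pos (by norm_num)]
        norm_num
      calc (∑' j : ℕ, P (E2 (k,m,j))) ≤ ((2^m : ℕ) : ℝ≥0∞) * B := h1
        _ = ENNReal.ofReal ((2:ℝ)^m * (2 * Real.exp (-(4*(m:ℝ)^2 * L k)))) := hcast1
        _ ≤ ENNReal.ofReal (2/((k:ℝ)+2)^2 * (1/2:ℝ)^m) := ENNReal.ofReal_le_ofReal hreal
        _ = ENNReal.ofReal (2/((k:ℝ)+2)^2) * (2:ℝ≥0∞)⁻¹^m := hcast2
  have hksum : ∀ k : ℕ, (∑' q : ℕ × ℕ, P (E2 (k, q))) ≤ ENNReal.ofReal (4/((k:ℝ)+2)^2) := by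
    intro k
    have h0 : (∑' q : ℕ × ℕ, P (E2 (k, q))) = ∑' m : ℕ, ∑' j : ℕ, P (E2 (k,m,j)) :=
      ENNReal.tsum_prod (f := fun m j => P (E2 (k, m, j)))
    rw [h0]
    calc (∑' m : ℕ, ∑' j : ℕ, P (E2 (k,m,j)))
        ≤ ∑' m : ℕ, ENNReal.ofReal (2/((k:ℝ)+2)^2) * (2:ℝ≥0∞)⁻¹^m :=
          ENNReal.tsum_le_tsum (hinner k)
      _ = ENNReal.ofReal (2/((k:ℝ)+2)^2) * ∑' m : ℕ, (2:ℝ≥0∞)⁻¹^m := ENNReal.tsum_mul_left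
      _ = ENNReal.ofReal (2/((k:ℝ)+2)^2) * 2 := by
          rw [ENNReal.tsum_geometric, ENNReal.one_sub_inv_two, inv_inv]
      _ = ENNReal.ofReal (4/((k:ℝ)+2)^2) := by
          rw [show (2:ℝ≥0∞) = ENNReal.ofReal (2:ℝ) by norm_num,
            ← ENNReal.ofReal_mul (by positivity)]
          congr 1
          ring
  have hE2sum : (∑' p : ℕ × ℕ × ℕ, P (E2 p)) ≠ ⊤ := by
    have h0 : (∑' p : ℕ × ℕ × ℕ, P (E2 p)) = ∑' k : ℕ, ∑' q : ℕ × ℕ, P (E2 (k, q)) :=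
      ENNReal.tsum_prod (f := fun k q => P (E2 (k, q)))
    have hsummable : Summable (fun k : ℕ => 4/((k:ℝ)+2)^2) := by
      have h1 : Summable (fun n : ℕ => 1/((n:ℝ))^2) := Real.summable_one_div_nat_pow.2 (by norm_num)
      have h2 : Summable (fun k : ℕ => 1/(((k+2:ℕ)):ℝ)^2) := (summable_nat_add_iff (f := fun n : ℕ => 1/((n:ℝ))^2) 2).2 h1
      have h3 : (fun k : ℕ => 4/((k:ℝ)+2)^2) = fun k : ℕ => 4 * (1/(((k+2:ℕ)):ℝ)^2) := by
        funext k; push_cast; ring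
      rw [h3]
      exact h2.mul_left 4
    have hle : (∑' p : ℕ × ℕ × ℕ, P (E2 p)) ≤ ∑' k : ℕ, ENNReal.ofReal (4/((k:ℝ)+2)^2) := by
      rw [h0]
      exact ENNReal.tsum_le_tsum hksum
    rw [← ENNReal.ofReal_tsum_of_nonneg (fun k => by positivity) hsummable] at hle
    exact ne_top_of_le_ne_top ENNReal.ofReal_ne_top hle
  have hBC2 : ∀ᵐ w ∂P, {p : ℕ × ℕ × ℕ | w ∈ E2 p}.Finite := by
    have h0 := MeasureTheory.measure_limsup_cofinite_eq_zero hE2sum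
    have h1 : ∀ᵐ w ∂P, w ∉ limsup E2 cofinite := by
      rw [ae_iff]
      simpa [not_not] using h0
    filter_upwards [h1] with w hw
    have h2 : ¬ ∃ᶠ p in cofinite, w ∈ E2 p :=
      fun hc => hw (Filter.mem_limsup_iff_frequently_mem.2 hc)
    rw [Filter.not_frequently] at h2
    have h3 := Filter.eventually_cofinite.1 h2
    simpa [not_not] using h3
  -- pointwise (good ω) argument
  filter_upwards [hcont, hBC1, hBC2] with w pcont h1 h2
  obtain ⟨K1, hK1⟩ := Filter.eventually_atTop.1 h1
  set K2 : ℕ := (h2.toFinset.sup fun p => p.1) + 1 with hK2def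
  have hK2 : ∀ k, K2 ≤ k → ∀ m j, w ∉ E2 (k,m,j) := by
    intro k hk m j hmem
    have hmemF : (k,m,j) ∈ h2.toFinset := (Set.Finite.mem_toFinset h2).2 hmem
    have hle := Finset.le_sup (f := fun p : ℕ×ℕ×ℕ => p.1) hmemF
    simp only at hle
    omega
  set C : ℝ := 2*Real.sqrt b0 + 8 with hCdef
  have hCpos : 0 < C := by positivity
  set K0 : ℕ := max (max K1 K2) 1 with hK0def
  have hsup : ∀ k : ℕ, K0 ≤ k → ∀ t ∈ Set.Ico ((k:ℝ)) ((k:ℝ)+1),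
      |η t w| ≤ C * Real.sqrt (L k) := by
    intro k hk t ht
    have hk1 : K1 ≤ k := le_trans (le_trans (le_max_left _ _) (le_max_left _ _)) hk
    have hk2 : K2 ≤ k := le_trans (le_trans (le_max_right _ _) (le_max_left _ _)) hk
    have hsLk : (0:ℝ) ≤ Real.sqrt (L k) := Real.sqrt_nonneg _
    have hchain := GPaux.dyadic_chain (fun t => η t w) (k:ℝ) (Nat.cast_nonneg k) pcont
        (fun m => 4/((m:ℝ))^2 * Real.sqrt (L k))
        (fun m => mul_nonneg (div_nonneg (by norm_num) (by positivity)) hsLk)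
        (8 * Real.sqrt (L k))
        (by
          intro M
          have hsum : ∑ i ∈ Finset.range M, 4/(((i+1:ℕ)):ℝ)^2 * Real.sqrt (L k)
              = (∑ i ∈ Finset.range M, (1:ℝ)/((i:ℝ)+1)^2) * (4 * Real.sqrt (L k)) := by
            rw [Finset.sum_mul]
            apply Finset.sum_congr rfl
            intro i _
            push_cast
            ring
          rw [hsum]
          calc (∑ i ∈ Finset.range M, (1:ℝ)/((i:ℝ)+1)^2) * (4 * Real.sqrt (L k))
              ≤ 2 * (4 * Real.sqrt (L k)) := by
                apply mul_le_mul_of_nonneg_right (GPaux.sum_inv_sq_le M) (by positivity)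
            _ = 8 * Real.sqrt (L k) := by ring)
        (by
          intro m hm j hj
          have hne := hK2 k hk2 m j
          rw [hE2def] at hne
          simp only [if_pos (And.intro hm hj)] at hne
          rw [Set.mem_setOf_eq] at hne
          push_neg at hne
          exact hne.le)
        t ht
    have hEk : w ∉ E1 k := hK1 k hk1
    rw [hE1def, Set.mem_setOf_eq] at hEk
    push_neg at hEk
    have htri : |η t w| ≤ |η t w - η (k:ℝ) w| + |η (k:ℝ) w| := by
      have := abs_add_le (η t w - η (k:ℝ) w) (η (k:ℝ) w)
      simpa using this
    calc |η t w| ≤ |η t w - η (k:ℝ) w| + |η (k:ℝ) w| := htri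
      _ ≤ 8 * Real.sqrt (L k) + 2*Real.sqrt b0*Real.sqrt (L k) := add_le_add hchain hEk.le
      _ = C * Real.sqrt (L k) := by rw [hCdef]; ring
  -- the decay majorant
  set B : ℕ → ℝ := fun k => (C * Real.sqrt (L k)) * (((d:ℝ)+1) / ((k:ℝ) - 1 + GPaux.del))
    with hBdef
  have hq : ∀ k : ℕ, 1 ≤ k → (0:ℝ) < (k:ℝ) - 1 + GPaux.del := by
    intro k hk
    have : (1:ℝ) ≤ (k:ℝ) := by exact_mod_cast hk
    linarith [GPaux.del_pos]
  have hprod : ∀ k : ℕ, K0 ≤ k → ∀ t ∈ Set.Ico ((k:ℝ)) ((k:ℝ)+1),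
      |η t w * hfun d t| ≤ B k := by
    intro k hk t ht
    have hk1 : 1 ≤ k := le_trans (le_max_right _ _) hk
    have hkR : (1:ℝ) ≤ (k:ℝ) := by exact_mod_cast hk1
    have h1 := hsup k hk t ht
    have h2 := GPaux.hfun_decay d hkR ht.1
    rw [abs_mul, abs_of_pos (GPaux.hfun_pos d t)]
    have hd1' : (0:ℝ) ≤ ((d:ℝ)+1) / ((k:ℝ) - 1 + GPaux.del) := by
      apply div_nonneg (by positivity) (hq k hk1).le
    apply mul_le_mul h1 h2 (GPaux.hfun_pos d t).le (by positivity)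
  have hBtend : Tendsto B atTop (𝓝 0) := by
    have hsqrtTop : Tendsto (fun k : ℕ => Real.sqrt ((k:ℝ)+2)) atTop atTop := by
      apply tendsto_atTop_atTop.2
      intro b
      refine ⟨⌈b^2⌉₊, fun k hk => ?_⟩
      rcases le_or_gt b 0 with hb | hb
      · exact le_trans hb (Real.sqrt_nonneg _)
      · rw [← Real.sqrt_sq hb.le]
        apply Real.sqrt_le_sqrt
        have hc : (⌈b^2⌉₊:ℝ) ≤ (k:ℝ) := by exact_mod_cast hk
        linarith [Nat.le_ceil (b^2)]
    have hHtend : Tendsto (fun k : ℕ => (C*((d:ℝ)+1)*4) / Real.sqrt ((k:ℝ)+2))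
        atTop (𝓝 0) := Tendsto.div_atTop tendsto_const_nhds hsqrtTop
    have hnonneg : ∀ᶠ (k:ℕ) in atTop, 0 ≤ B k := by
      filter_upwards [Filter.eventually_ge_atTop 1] with k hk
      simp only [hBdef]
      have := hq k hk
      positivity
    have hle : ∀ᶠ (k:ℕ) in atTop, B k ≤ (C*((d:ℝ)+1)*4) / Real.sqrt ((k:ℝ)+2) := by
      filter_upwards [Filter.eventually_ge_atTop 2] with k hk
      have hkR : (2:ℝ) ≤ (k:ℝ) := by exact_mod_cast hk
      have hqpos := hq k (by omega)
      have hs : (0:ℝ) < Real.sqrt ((k:ℝ)+2) := Real.sqrt_pos.2 (by linarith)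
      have hsL : Real.sqrt (L k) ≤ Real.sqrt ((k:ℝ)+2) := by
        apply Real.sqrt_le_sqrt
        simp only [hLdef]
        exact Real.log_le_self (by positivity)
      have hss : Real.sqrt ((k:ℝ)+2) * Real.sqrt ((k:ℝ)+2) = (k:ℝ)+2 :=
        Real.mul_self_sqrt (by positivity)
      have h4q : (k:ℝ)+2 ≤ 4*((k:ℝ)-1+GPaux.del) := by linarith [GPaux.del_pos]
      have hkey : Real.sqrt (L k) * Real.sqrt ((k:ℝ)+2) ≤ 4*((k:ℝ)-1+GPaux.del) := by
        calc Real.sqrt (L k) * Real.sqrt ((k:ℝ)+2)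
            ≤ Real.sqrt ((k:ℝ)+2) * Real.sqrt ((k:ℝ)+2) :=
              mul_le_mul_of_nonneg_right hsL hs.le
          _ = (k:ℝ)+2 := hss
          _ ≤ 4*((k:ℝ)-1+GPaux.del) := h4q
      simp only [hBdef]
      have hgoal : (C * Real.sqrt (L k)) * (((d:ℝ)+1) / ((k:ℝ)-1+GPaux.del))
          = (C * ((d:ℝ)+1) * Real.sqrt (L k)) / ((k:ℝ)-1+GPaux.del) := by ring
      rw [hgoal, div_le_div_iff₀ hqpos hs]
      have hmul := mul_le_mul_of_nonneg_left hkey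
        (show (0:ℝ) ≤ C*((d:ℝ)+1) by positivity)
      nlinarith [hmul]
    exact squeeze_zero' hnonneg hle hHtend
  -- global floor bound
  have hglobal : ∀ t : ℝ, (K0:ℝ) ≤ t → |η t w * hfun d t| ≤ B ⌊t⌋₊ ∧ K0 ≤ ⌊t⌋₊ := by
    intro t ht
    have ht0 : (0:ℝ) ≤ t := le_trans (Nat.cast_nonneg K0) ht
    have hfl : K0 ≤ ⌊t⌋₊ := Nat.le_floor ht
    have hfl1 : (⌊t⌋₊:ℝ) ≤ t := Nat.floor_le ht0
    have hfl2 : t < ⌊t⌋₊ + 1 := Nat.lt_floor_add_one t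
    exact ⟨hprod ⌊t⌋₊ hfl t ⟨hfl1, hfl2⟩, hfl⟩
  refine ⟨?_, (GPaux.hfun_continuous d).continuousOn.mul pcont, ?_⟩
  · -- goal 1 : ENNReal sup tendsto
    rw [ENNReal.tendsto_nhds_zero]
    intro ε hε
    obtain ⟨e, he0, hee⟩ : ∃ e : ℝ, 0 < e ∧ ENNReal.ofReal e ≤ ε := by
      rcases eq_or_ne ε ⊤ with h | h
      · exact ⟨1, one_pos, by simp [h]⟩
      · exact ⟨ε.toReal, ENNReal.toReal_pos hε.ne' h, by rw [ENNReal.ofReal_toReal h]⟩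
    obtain ⟨K3, hK3⟩ := Filter.eventually_atTop.1 (hBtend.eventually_lt_const he0)
    set N : ℕ := max K0 K3 with hNdef
    filter_upwards [Filter.eventually_ge_atTop ((N:ℝ))] with τ hτ
    apply iSup_le
    rintro ⟨t, htt⟩
    have htN : (N:ℝ) ≤ t := le_trans hτ htt
    have hK0N : (K0:ℝ) ≤ (N:ℝ) := by exact_mod_cast le_max_left K0 K3
    have htK0 : (K0:ℝ) ≤ t := le_trans hK0N htN
    obtain ⟨hb, hfl⟩ := hglobal t htK0
    have hNfl : N ≤ ⌊t⌋₊ := Nat.le_floor htN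
    have hfl3 : K3 ≤ ⌊t⌋₊ := le_trans (le_max_right K0 K3) hNfl
    have hBe : B ⌊t⌋₊ ≤ e := (hK3 _ hfl3).le
    have habs : |η t w * hfun d t| ≤ e := le_trans hb hBe
    calc (‖η t w * hfun d t‖₊ : ℝ≥0∞)
        = ENNReal.ofReal ‖η t w * hfun d t‖ := (ofReal_norm _).symm
      _ ≤ ENNReal.ofReal e := ENNReal.ofReal_le_ofReal (by rwa [Real.norm_eq_abs])
      _ ≤ ε := hee
  · -- goal 3 : tendsto at infinity
    have hev : ∀ᶠ t : ℝ in atTop, ‖hfun d t * η t w‖ ≤ B ⌊t⌋₊ := by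
      filter_upwards [Filter.eventually_ge_atTop ((K0:ℝ))] with t ht
      have := (hglobal t ht).1
      rw [Real.norm_eq_abs, mul_comm (hfun d t)]
      exact this
    exact squeeze_zero_norm' hev (hBtend.comp tendsto_nat_floor_atTop)

end
end

section
/- Let θ₀ = (Ω₀, η_{0,0}, …, η_{d,0}) with Ω₀ > 0 and the η_{j,0} : [0,∞) → ℝ continuous, and assume f_x(·,θ₀) is a probability density on [0,∞) for every x ∈ [0,1]^d. Let Q be a Borel probability measure on [0,1]^d and assume (A3): ∫_{[0,1]^d} ∫_0^∞ t f_x(t,θ₀) dt Q(dx) < ∞. Then for every ε ∈ (0,1) there exist δ(ε) ∈ (0,1/2) and τ(ε) > 1 such that for every τ ≥ τ(ε) and every parameter θ = (Ω, η_0, …, η_d) ∈ B_{δ(ε),τ} (with Ω > 0 and the η_j continuous), ∫_{[0,1]^d} ∫_0^∞ log(f_x(t,θ₀)/f_x(t,θ)) f_x(t,θ₀) dt Q(dx) < ε. -/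
open MeasureTheory ProbabilityTheory Filter Topology
open scoped ENNReal NNReal

noncomputable section

/-- The sigmoid (logistic) function `σ(x) = 1/(1+e^{-x})`. -/
def sigmoid (y : ℝ) : ℝ := 1 / (1 + Real.exp (-y))

/-- `Y_x(t) = η₀(t) + ∑_{j=1}^d x_j η_j(t)`. -/
def Yproc {d : ℕ} (η : Fin (d + 1) → ℝ → ℝ) (x : Fin d → ℝ) (t : ℝ) : ℝ :=
  η 0 t + ∑ j : Fin d, x j * η j.succ t

/-- The survival density `f_x(t,θ) = Ω σ(Y_x(t)) exp(-∫₀ᵗ Ω σ(Y_x(s)) ds)` for `t ≥ 0`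
(and `0` for `t < 0`), for a parameter `θ = (Ω, η)`. -/
def dens {d : ℕ} (θ : ℝ × (Fin (d + 1) → ℝ → ℝ)) (x : Fin d → ℝ) (t : ℝ) : ℝ :=
  if 0 ≤ t then
    θ.1 * sigmoid (Yproc θ.2 x t) *
      Real.exp (-(∫ s in (0:ℝ)..t, θ.1 * sigmoid (Yproc θ.2 x s)))
  else 0

/-- The unit cube `[0,1]^d` of covariates. -/
def unitCube (d : ℕ) : Set (Fin d → ℝ) := Set.univ.pi fun _ => Set.Icc (0:ℝ) 1

/-- Membership in the set `B_{δ,τ}`: `|Ω/Ω₀ - 1| < δ`, `sup_{[0,τ]}|η_j - η_{j,0}| ≤ δ/(1+τ)`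
for every `j`, and `inf_{t>τ} η_j(t) h_d(t) > -1` for every `j`. -/
def memB {d : ℕ} (Ω₀ : ℝ) (η₀ : Fin (d + 1) → ℝ → ℝ) (δ τ : ℝ)
    (θ : ℝ × (Fin (d + 1) → ℝ → ℝ)) : Prop :=
  |θ.1 / Ω₀ - 1| < δ ∧
  (∀ j, ∀ t ∈ Set.Icc (0:ℝ) τ, |θ.2 j t - η₀ j t| ≤ δ / (1 + τ)) ∧
  (∀ j, ∃ c : ℝ, -1 < c ∧ ∀ t ∈ Set.Ioi τ, c ≤ θ.2 j t * hfun d t)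

lemma sigmoid_pos (y : ℝ) : 0 < sigmoid y := by
  unfold sigmoid; positivity

lemma sigmoid_le_one (y : ℝ) : sigmoid y ≤ 1 := by
  rw [sigmoid, div_le_one (by positivity)]
  nlinarith [Real.exp_pos (-y)]

lemma continuous_sigmoid' : Continuous sigmoid := by
  apply continuous_const.div (by fun_prop)
  intro y; positivity

lemma log_sigmoid (y : ℝ) : Real.log (sigmoid y) = -Real.log (1 + Real.exp (-y)) := by
  rw [sigmoid, Real.log_div one_ne_zero (by positivity), Real.log_one]; ring

lemma log_one_add_exp_le {u v : ℝ} (h : u ≤ v) :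
    Real.log (1 + Real.exp v) ≤ (v - u) + Real.log (1 + Real.exp u) := by
  have h1 : (1:ℝ) + Real.exp v ≤ Real.exp (v - u) * (1 + Real.exp u) := by
    have h2 : (1:ℝ) ≤ Real.exp (v - u) := Real.one_le_exp (by linarith)
    have h3 : Real.exp (v - u) * Real.exp u = Real.exp v := by
      rw [← Real.exp_add]; ring_nf
    nlinarith
  calc Real.log (1 + Real.exp v) ≤ Real.log (Real.exp (v - u) * (1 + Real.exp u)) :=
        Real.log_le_log (by positivity) h1
    _ = (v - u) + Real.log (1 + Real.exp u) := by
        rw [Real.log_mul (by positivity) (by positivity), Real.log_exp]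

lemma log_one_add_exp_mono {u v : ℝ} (h : u ≤ v) :
    Real.log (1 + Real.exp u) ≤ Real.log (1 + Real.exp v) :=
  Real.log_le_log (by positivity) (by nlinarith [Real.exp_le_exp.2 h])

lemma abs_log_sigmoid_sub (a b : ℝ) :
    |Real.log (sigmoid a) - Real.log (sigmoid b)| ≤ |a - b| := by
  rw [log_sigmoid, log_sigmoid]
  rcases le_total a b with h | h
  · have h1 := log_one_add_exp_mono (show -b ≤ -a by linarith)
    have h2 := log_one_add_exp_le (show -b ≤ -a by linarith)
    rw [abs_of_nonpos (by linarith), abs_of_nonpos (by linarith)]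
    linarith
  · have h1 := log_one_add_exp_mono (show -a ≤ -b by linarith)
    have h2 := log_one_add_exp_le (show -a ≤ -b by linarith)
    rw [abs_of_nonneg (by linarith), abs_of_nonneg (by linarith)]
    linarith

lemma sigmoid_mono {a b : ℝ} (h : a ≤ b) : sigmoid a ≤ sigmoid b := by
  unfold sigmoid
  apply one_div_le_one_div_of_le (by positivity)
  have := Real.exp_le_exp.2 (neg_le_neg h)
  linarith

lemma abs_sigmoid_sub (a b : ℝ) : |sigmoid a - sigmoid b| ≤ |a - b| := by
  have key : ∀ u v : ℝ, u ≤ v → sigmoid v - sigmoid u ≤ v - u := by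
    intro u v huv
    have h1 : Real.log (sigmoid u / sigmoid v) ≤ sigmoid u / sigmoid v - 1 :=
      Real.log_le_sub_one_of_pos (div_pos (sigmoid_pos u) (sigmoid_pos v))
    have h2 : Real.log (sigmoid u / sigmoid v) =
        Real.log (sigmoid u) - Real.log (sigmoid v) :=
      Real.log_div (ne_of_gt (sigmoid_pos u)) (ne_of_gt (sigmoid_pos v))
    have h3 : |Real.log (sigmoid u) - Real.log (sigmoid v)| ≤ |u - v| := abs_log_sigmoid_sub u v
    have h4 : Real.log (sigmoid v) - Real.log (sigmoid u) ≤ v - u := by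
      have h5 : Real.log (sigmoid u) ≤ Real.log (sigmoid v) :=
        Real.log_le_log (sigmoid_pos u) (sigmoid_mono huv)
      rw [abs_of_nonpos (by linarith), abs_of_nonpos (by linarith)] at h3
      linarith
    have hsv : 0 < sigmoid v := sigmoid_pos v
    have hsv1 : sigmoid v ≤ 1 := sigmoid_le_one v
    -- (sigmoid v - sigmoid u)/sigmoid v ≤ 1 - sigmoid u / sigmoid v ≤ log(sv) - log(su) ≤ v - u
    have h6 : 1 - sigmoid u / sigmoid v ≤ v - u := by
      rw [h2] at h1; linarith
    have h7 : sigmoid v - sigmoid u = (1 - sigmoid u / sigmoid v) * sigmoid v := by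
      field_simp
    rw [h7]
    calc (1 - sigmoid u / sigmoid v) * sigmoid v ≤ (v - u) * sigmoid v := by
          apply mul_le_mul_of_nonneg_right h6 hsv.le
      _ ≤ (v - u) * 1 := by
          apply mul_le_mul_of_nonneg_left hsv1 (by linarith)
      _ = v - u := mul_one _
  rcases le_total a b with h | h
  · rw [abs_of_nonpos (by have := sigmoid_mono h; linarith), abs_of_nonpos (by linarith)]
    have := key a b h; linarith
  · rw [abs_of_nonneg (by have := sigmoid_mono h; linarith), abs_of_nonneg (by linarith)]
    have := key b a h; linarith


lemma dens_nonneg {d : ℕ} (θ : ℝ × (Fin (d + 1) → ℝ → ℝ)) (hΩ : 0 ≤ θ.1)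
    (x : Fin d → ℝ) (t : ℝ) : 0 ≤ dens θ x t := by
  unfold dens
  split
  · have := sigmoid_pos (Yproc θ.2 x t)
    positivity
  · exact le_rfl

lemma dens_pos {d : ℕ} {θ : ℝ × (Fin (d + 1) → ℝ → ℝ)} (hΩ : 0 < θ.1)
    (x : Fin d → ℝ) {t : ℝ} (ht : 0 ≤ t) : 0 < dens θ x t := by
  rw [dens, if_pos ht]
  have := sigmoid_pos (Yproc θ.2 x t)
  positivity

lemma Yproc_continuousOn {d : ℕ} (η : Fin (d + 1) → ℝ → ℝ)
    (hη : ∀ j, ContinuousOn (η j) (Set.Ici 0)) (x : Fin d → ℝ) :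
    ContinuousOn (Yproc η x) (Set.Ici 0) := by
  apply (hη 0).add
  exact continuousOn_finset_sum _ fun j _ => continuousOn_const.mul (hη j.succ)

/-- Extension of the coefficient functions to all of `ℝ` by reflection at `0`. -/
def etaExt {d : ℕ} (η : Fin (d + 1) → ℝ → ℝ) (j : Fin (d + 1)) (t : ℝ) : ℝ :=
  η j (max t 0)

lemma etaExt_continuous {d : ℕ} (η : Fin (d + 1) → ℝ → ℝ)
    (hη : ∀ j, ContinuousOn (η j) (Set.Ici 0)) (j : Fin (d + 1)) :
    Continuous (etaExt η j) :=
  (hη j).comp_continuous (continuous_id.max continuous_const) fun t => le_max_right t 0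

lemma etaExt_eq {d : ℕ} (η : Fin (d + 1) → ℝ → ℝ) (j : Fin (d + 1)) {t : ℝ} (ht : 0 ≤ t) :
    etaExt η j t = η j t := by
  rw [etaExt, max_eq_left ht]

/-- Auxiliary globally-defined version of `dens`. -/
def densAux {d : ℕ} (θ : ℝ × (Fin (d + 1) → ℝ → ℝ)) (x : Fin d → ℝ) (t : ℝ) : ℝ :=
  θ.1 * sigmoid (Yproc (etaExt θ.2) x t) *
    Real.exp (-(∫ s in (0:ℝ)..t, θ.1 * sigmoid (Yproc (etaExt θ.2) x s)))

lemma Yproc_etaExt_eq {d : ℕ} (η : Fin (d + 1) → ℝ → ℝ) (x : Fin d → ℝ) {t : ℝ} (ht : 0 ≤ t) :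
    Yproc (etaExt η) x t = Yproc η x t := by
  unfold Yproc
  rw [etaExt_eq η 0 ht]
  congr 1
  exact Finset.sum_congr rfl fun j _ => by rw [etaExt_eq η j.succ ht]

lemma dens_eq_densAux {d : ℕ} (θ : ℝ × (Fin (d + 1) → ℝ → ℝ)) (x : Fin d → ℝ) (t : ℝ) :
    dens θ x t = if 0 ≤ t then densAux θ x t else 0 := by
  unfold dens
  split
  · rename_i ht
    unfold densAux
    rw [Yproc_etaExt_eq θ.2 x ht]
    congr 3
    apply intervalIntegral.integral_congr
    intro s hs
    rw [Set.uIcc_of_le ht] at hs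
    simp only [Yproc_etaExt_eq θ.2 x hs.1]
  · rfl

lemma densAux_continuous {d : ℕ} (θ : ℝ × (Fin (d + 1) → ℝ → ℝ))
    (hθ : ∀ j, ContinuousOn (θ.2 j) (Set.Ici 0)) :
    Continuous (fun p : (Fin d → ℝ) × ℝ => densAux θ p.1 p.2) := by
  have hY : Continuous (fun p : (Fin d → ℝ) × ℝ => Yproc (etaExt θ.2) p.1 p.2) := by
    unfold Yproc
    apply ((etaExt_continuous θ.2 hθ 0).comp continuous_snd).add
    apply continuous_finset_sum
    intro j _
    exact ((continuous_apply j).comp continuous_fst).mul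
      ((etaExt_continuous θ.2 hθ j.succ).comp continuous_snd)
  have hS : Continuous (fun p : (Fin d → ℝ) × ℝ =>
      θ.1 * sigmoid (Yproc (etaExt θ.2) p.1 p.2)) :=
    continuous_const.mul (continuous_sigmoid'.comp hY)
  have hI : Continuous (fun p : (Fin d → ℝ) × ℝ =>
      ∫ s in (0:ℝ)..p.2, θ.1 * sigmoid (Yproc (etaExt θ.2) p.1 s)) := by
    exact intervalIntegral.continuous_parametric_primitive_of_continuous
      (μ := volume) (f := fun x s => θ.1 * sigmoid (Yproc (etaExt θ.2) x s)) hS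
  exact (hS.mul (hI.neg.rexp))

lemma dens_measurable_prod {d : ℕ} (θ : ℝ × (Fin (d + 1) → ℝ → ℝ))
    (hθ : ∀ j, ContinuousOn (θ.2 j) (Set.Ici 0)) :
    Measurable (fun p : (Fin d → ℝ) × ℝ => dens θ p.1 p.2) := by
  simp only [dens_eq_densAux]
  exact Measurable.ite (measurableSet_le measurable_const measurable_snd)
    (densAux_continuous θ hθ).measurable measurable_const

lemma dens_measurable {d : ℕ} (θ : ℝ × (Fin (d + 1) → ℝ → ℝ))
    (hθ : ∀ j, ContinuousOn (θ.2 j) (Set.Ici 0)) (x : Fin d → ℝ) :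
    Measurable (fun t => dens θ x t) :=
  (dens_measurable_prod θ hθ).comp (measurable_prodMk_left)

lemma log_dens_ratio {d : ℕ} (θ₀ θ : ℝ × (Fin (d + 1) → ℝ → ℝ)) (h0 : 0 < θ₀.1)
    (h1 : 0 < θ.1) (x : Fin d → ℝ) {t : ℝ} (ht : 0 ≤ t) :
    Real.log (dens θ₀ x t / dens θ x t) =
      (Real.log θ₀.1 - Real.log θ.1)
      + (Real.log (sigmoid (Yproc θ₀.2 x t)) - Real.log (sigmoid (Yproc θ.2 x t)))
      + ((∫ s in (0:ℝ)..t, θ.1 * sigmoid (Yproc θ.2 x s))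
          - ∫ s in (0:ℝ)..t, θ₀.1 * sigmoid (Yproc θ₀.2 x s)) := by
  have s0 := sigmoid_pos (Yproc θ₀.2 x t)
  have s1 := sigmoid_pos (Yproc θ.2 x t)
  rw [Real.log_div (ne_of_gt (dens_pos h0 x ht)) (ne_of_gt (dens_pos h1 x ht)),
    dens, if_pos ht, dens, if_pos ht,
    Real.log_mul (by positivity) (Real.exp_ne_zero _),
    Real.log_mul (by positivity) (Real.exp_ne_zero _),
    Real.log_mul (ne_of_gt h0) (ne_of_gt s0),
    Real.log_mul (ne_of_gt h1) (ne_of_gt s1),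
    Real.log_exp, Real.log_exp]
  ring

set_option maxHeartbeats 1000000 in
/-- The central pointwise estimate. -/
lemma pointwise_bound {d : ℕ} {Ω₀ : ℝ} (hΩ₀ : 0 < Ω₀) {η₀ : Fin (d + 1) → ℝ → ℝ}
    (hη₀cont : ∀ j, ContinuousOn (η₀ j) (Set.Ici 0))
    {δ τ : ℝ} (hδ0 : 0 < δ) (hδh : δ < 1/2) (hτ : 2 ≤ τ)
    (θ : ℝ × (Fin (d + 1) → ℝ → ℝ)) (hθ1 : 0 < θ.1)
    (hθcont : ∀ j, ContinuousOn (θ.2 j) (Set.Ici 0))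
    (hB : memB Ω₀ η₀ δ τ θ) {x : Fin d → ℝ} (hx : ∀ j, x j ∈ Set.Icc (0:ℝ) 1)
    {t : ℝ} (ht : 0 ≤ t) :
    Real.log (dens (Ω₀, η₀) x t / dens θ x t) ≤
      δ * (((d:ℝ)+3) + Ω₀*((d:ℝ)+2) * t)
        + Set.indicator (Set.Ioi τ) (fun s => (1+2*Ω₀) * s) t := by
  obtain ⟨habs, hsup, hinf⟩ := hB
  rw [log_dens_ratio (Ω₀, η₀) θ hΩ₀ hθ1 x ht]
  -- bounds on θ.1
  rw [abs_lt] at habs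
  have hΩup : θ.1 < (1+δ) * Ω₀ :=
    (div_lt_iff₀ hΩ₀).mp (by linarith [habs.2])
  have hΩlo : (1-δ) * Ω₀ < θ.1 :=
    (lt_div_iff₀ hΩ₀).mp (by linarith [habs.1])
  have hΩd : |θ.1 - Ω₀| ≤ δ * Ω₀ := by
    rw [abs_le]; constructor <;> nlinarith
  -- term 1
  have hterm1 : Real.log (Ω₀, η₀).1 - Real.log θ.1 ≤ 2 * δ := by
    have e1 : (2*δ) + 1 ≤ Real.exp (2*δ) := Real.add_one_le_exp _
    have e2 : Real.exp (-(2*δ)) * Real.exp (2*δ) = 1 := by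
      rw [← Real.exp_add]; simp
    have e3 : Real.exp (-(2*δ)) ≤ 1 - δ := by
      nlinarith [Real.exp_pos (-(2*δ)), Real.exp_pos (2*δ)]
    have l1 : Real.log ((1-δ)*Ω₀) ≤ Real.log θ.1 :=
      Real.log_le_log (by nlinarith) hΩlo.le
    have l2 : Real.log ((1-δ)*Ω₀) = Real.log (1-δ) + Real.log Ω₀ :=
      Real.log_mul (by linarith) (ne_of_gt hΩ₀)
    have l3 : -(2*δ) ≤ Real.log (1-δ) := by
      have := Real.log_le_log (Real.exp_pos (-(2*δ))) e3
      rwa [Real.log_exp] at this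
    simp only []
    linarith
  have hcont0 : ContinuousOn (Yproc η₀ x) (Set.Ici 0) := Yproc_continuousOn η₀ hη₀cont x
  have hcontθ : ContinuousOn (Yproc θ.2 x) (Set.Ici 0) := Yproc_continuousOn θ.2 hθcont x
  have hint0 : IntervalIntegrable (fun s => Ω₀ * sigmoid (Yproc η₀ x s)) volume 0 t := by
    apply ContinuousOn.intervalIntegrable
    rw [Set.uIcc_of_le ht]
    exact (continuous_const.continuousOn).mul
      (continuous_sigmoid'.comp_continuousOn (hcont0.mono (Set.Icc_subset_Ici_self)))
  have hintθ : IntervalIntegrable (fun s => θ.1 * sigmoid (Yproc θ.2 x s)) volume 0 t := by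
    apply ContinuousOn.intervalIntegrable
    rw [Set.uIcc_of_le ht]
    exact (continuous_const.continuousOn).mul
      (continuous_sigmoid'.comp_continuousOn (hcontθ.mono (Set.Icc_subset_Ici_self)))
  -- difference of Y processes on [0, τ]
  have hYdiff : ∀ s ∈ Set.Icc (0:ℝ) τ, |Yproc θ.2 x s - Yproc η₀ x s| ≤ ((d:ℝ)+1)*δ := by
    intro s hs
    have hkey : Yproc θ.2 x s - Yproc η₀ x s =
        (θ.2 0 s - η₀ 0 s) + ∑ j : Fin d, x j * (θ.2 j.succ s - η₀ j.succ s) := by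
      unfold Yproc
      simp only [mul_sub]
      rw [Finset.sum_sub_distrib]
      ring
    have hb : ∀ j : Fin (d+1), |θ.2 j s - η₀ j s| ≤ δ/(1+τ) := fun j => hsup j s hs
    have hδτ : δ/(1+τ) ≤ δ := by
      apply div_le_self hδ0.le; linarith
    calc |Yproc θ.2 x s - Yproc η₀ x s|
        ≤ |θ.2 0 s - η₀ 0 s| + |∑ j : Fin d, x j * (θ.2 j.succ s - η₀ j.succ s)| := by
          rw [hkey]; exact abs_add_le _ _
      _ ≤ δ + ∑ j : Fin d, |x j * (θ.2 j.succ s - η₀ j.succ s)| := by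
          gcongr
          · exact (hb 0).trans hδτ
          · exact Finset.abs_sum_le_sum_abs _ _
      _ ≤ δ + ∑ _j : Fin d, δ := by
          gcongr with j _
          rw [abs_mul]
          have hx1 : |x j| ≤ 1 := by
            rw [abs_le]; exact ⟨by linarith [(hx j).1], (hx j).2⟩
          calc |x j| * |θ.2 j.succ s - η₀ j.succ s| ≤ 1 * (δ/(1+τ)) := by
                apply mul_le_mul hx1 (hb j.succ) (abs_nonneg _) zero_le_one
            _ ≤ δ := by rw [one_mul]; exact hδτ
      _ = δ + (d:ℝ) * δ := by rw [Finset.sum_const, Finset.card_univ, Fintype.card_fin]; simp [nsmul_eq_mul]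
      _ = ((d:ℝ)+1)*δ := by ring
  rcases le_or_gt t τ with htτ | htτ
  · -- case t ≤ τ
    rw [Set.indicator_of_notMem (by simp [htτ, not_lt] : t ∉ Set.Ioi τ)]
    have hY := hYdiff t ⟨ht, htτ⟩
    have hterm2 : Real.log (sigmoid (Yproc (Ω₀, η₀).2 x t)) - Real.log (sigmoid (Yproc θ.2 x t))
        ≤ ((d:ℝ)+1)*δ := by
      have := abs_log_sigmoid_sub (Yproc η₀ x t) (Yproc θ.2 x t)
      have h2 : |Yproc η₀ x t - Yproc θ.2 x t| ≤ ((d:ℝ)+1)*δ := by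
        rw [abs_sub_comm]; exact hY
      simp only []
      calc Real.log (sigmoid (Yproc η₀ x t)) - Real.log (sigmoid (Yproc θ.2 x t))
          ≤ |Real.log (sigmoid (Yproc η₀ x t)) - Real.log (sigmoid (Yproc θ.2 x t))| :=
            le_abs_self _
        _ ≤ |Yproc η₀ x t - Yproc θ.2 x t| := abs_log_sigmoid_sub _ _
        _ ≤ ((d:ℝ)+1)*δ := h2
    have hterm3 : (∫ s in (0:ℝ)..t, θ.1 * sigmoid (Yproc θ.2 x s))
        - (∫ s in (0:ℝ)..t, (Ω₀, η₀).1 * sigmoid (Yproc (Ω₀, η₀).2 x s))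
        ≤ t * (δ * Ω₀ * ((d:ℝ)+2)) := by
      simp only []
      rw [← intervalIntegral.integral_sub hintθ hint0]
      have hmono : ∀ s ∈ Set.Icc (0:ℝ) t,
          θ.1 * sigmoid (Yproc θ.2 x s) - Ω₀ * sigmoid (Yproc η₀ x s) ≤ δ * Ω₀ * ((d:ℝ)+2) := by
        intro s hs
        have hsτ : s ∈ Set.Icc (0:ℝ) τ := ⟨hs.1, le_trans hs.2 htτ⟩
        have hYs := hYdiff s hsτ
        have hσd : |sigmoid (Yproc θ.2 x s) - sigmoid (Yproc η₀ x s)| ≤ ((d:ℝ)+1)*δ :=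
          le_trans (abs_sigmoid_sub _ _) hYs
        have hs1 : sigmoid (Yproc θ.2 x s) ≤ 1 := sigmoid_le_one _
        have hs0 : 0 < sigmoid (Yproc θ.2 x s) := sigmoid_pos _
        have key : θ.1 * sigmoid (Yproc θ.2 x s) - Ω₀ * sigmoid (Yproc η₀ x s) =
            (θ.1 - Ω₀) * sigmoid (Yproc θ.2 x s)
              + Ω₀ * (sigmoid (Yproc θ.2 x s) - sigmoid (Yproc η₀ x s)) := by ring
        rw [key]
        have b1 : (θ.1 - Ω₀) * sigmoid (Yproc θ.2 x s) ≤ δ * Ω₀ := by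
          have h := le_abs_self (θ.1 - Ω₀)
          have h' := abs_nonneg (θ.1 - Ω₀)
          nlinarith [hs0, hs1, hΩd]
        have b2 : Ω₀ * (sigmoid (Yproc θ.2 x s) - sigmoid (Yproc η₀ x s)) ≤ Ω₀ * (((d:ℝ)+1)*δ) := by
          apply mul_le_mul_of_nonneg_left _ hΩ₀.le
          exact (le_abs_self _).trans hσd
        nlinarith
      calc (∫ s in (0:ℝ)..t, (θ.1 * sigmoid (Yproc θ.2 x s) - Ω₀ * sigmoid (Yproc η₀ x s)))
          ≤ ∫ _s in (0:ℝ)..t, δ * Ω₀ * ((d:ℝ)+2) :=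
            intervalIntegral.integral_mono_on ht (hintθ.sub hint0)
              intervalIntegrable_const hmono
        _ = t * (δ * Ω₀ * ((d:ℝ)+2)) := by
            rw [intervalIntegral.integral_const, smul_eq_mul]; ring
    have hd0 : (0:ℝ) ≤ (d:ℝ) := Nat.cast_nonneg d
    nlinarith [hterm1, hterm2, hterm3]
  · -- case τ < t
    rw [Set.indicator_of_mem (Set.mem_Ioi.2 htτ)]
    have ht2 : 2 < t := lt_of_le_of_lt hτ htτ
    have hexp2 : Real.exp (-t) < 1/2 := by
      have h1 : Real.exp (-t) < Real.exp (-2) := Real.exp_lt_exp.2 (by linarith)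
      have h2 : (2:ℝ) + 1 ≤ Real.exp 2 := Real.add_one_le_exp 2
      have h3 : Real.exp (-2) * Real.exp 2 = 1 := by rw [← Real.exp_add]; simp
      nlinarith [Real.exp_pos (-2)]
    set r : ℝ := t + Real.log (1 - Real.exp (-t)) with hr_def
    have h1e : (0:ℝ) < 1 - Real.exp (-t) := by linarith [Real.exp_pos (-t)]
    have hrpos : 0 < r := by
      have : Real.exp (-t) < 1 - Real.exp (-t) := by linarith
      have hlog := Real.log_lt_log (Real.exp_pos (-t)) this
      rw [Real.log_exp] at hlog
      simp only [hr_def]; linarith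
    have hfun_eq : hfun d t = ((d:ℝ)+1)/r := by
      rw [hfun, if_neg (by push_neg; linarith : ¬ t ≤ 1)]
    have hηlb : ∀ j, -(r/((d:ℝ)+1)) ≤ θ.2 j t := by
      intro j
      obtain ⟨c, hc, hcall⟩ := hinf j
      have hct := hcall t (Set.mem_Ioi.2 htτ)
      rw [hfun_eq] at hct
      have hd1 : (0:ℝ) < (d:ℝ)+1 := by positivity
      have hfd : (0:ℝ) < ((d:ℝ)+1)/r := by positivity
      have : θ.2 j t = (θ.2 j t * (((d:ℝ)+1)/r)) * (r/((d:ℝ)+1)) := by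
        field_simp
      rw [this]
      have hrd : (0:ℝ) < r/((d:ℝ)+1) := by positivity
      calc -(r/((d:ℝ)+1)) = (-1) * (r/((d:ℝ)+1)) := by ring
        _ ≤ c * (r/((d:ℝ)+1)) := by apply mul_le_mul_of_nonneg_right hc.le hrd.le
        _ ≤ (θ.2 j t * (((d:ℝ)+1)/r)) * (r/((d:ℝ)+1)) := by
            apply mul_le_mul_of_nonneg_right hct hrd.le
    have hYlb : -r ≤ Yproc θ.2 x t := by
      have hterm : ∀ j : Fin d, -(r/((d:ℝ)+1)) ≤ x j * θ.2 j.succ t := by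
        intro j
        rcases le_or_gt 0 (θ.2 j.succ t) with hv | hv
        · have : 0 ≤ x j * θ.2 j.succ t := mul_nonneg (hx j).1 hv
          have : 0 < r/((d:ℝ)+1) := by positivity
          linarith
        · have h1 : θ.2 j.succ t ≤ x j * θ.2 j.succ t := by
            nlinarith [(hx j).1, (hx j).2]
          exact le_trans (hηlb j.succ) h1
      unfold Yproc
      have hsum : ∑ _j : Fin d, -(r/((d:ℝ)+1)) ≤ ∑ j : Fin d, x j * θ.2 j.succ t :=
        Finset.sum_le_sum fun j _ => hterm j
      rw [Finset.sum_const, Finset.card_univ, Fintype.card_fin] at hsum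
      have h0 := hηlb 0
      have hdpos : (0:ℝ) < (d:ℝ)+1 := by positivity
      have : -(r/((d:ℝ)+1)) + (d:ℝ) * -(r/((d:ℝ)+1)) = -r := by field_simp; ring
      simp only [nsmul_eq_mul] at hsum
      linarith
    have hterm2a : Real.log (sigmoid (Yproc (Ω₀, η₀).2 x t)) ≤ 0 :=
      Real.log_nonpos (sigmoid_pos _).le (sigmoid_le_one _)
    have hterm2b : -Real.log (sigmoid (Yproc θ.2 x t)) ≤ t := by
      rw [log_sigmoid, neg_neg]
      have hee : Real.exp (-(Yproc θ.2 x t)) ≤ Real.exp r := Real.exp_le_exp.2 (by linarith)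
      have her : Real.exp r = Real.exp t * (1 - Real.exp (-t)) := by
        rw [hr_def, Real.exp_add, Real.exp_log h1e]
      have het : Real.exp t * Real.exp (-t) = 1 := by rw [← Real.exp_add]; simp
      have hb : 1 + Real.exp (-(Yproc θ.2 x t)) ≤ Real.exp t := by nlinarith
      calc Real.log (1 + Real.exp (-(Yproc θ.2 x t))) ≤ Real.log (Real.exp t) :=
            Real.log_le_log (by positivity) hb
        _ = t := Real.log_exp t
    have hterm3 : (∫ s in (0:ℝ)..t, θ.1 * sigmoid (Yproc θ.2 x s))
        - (∫ s in (0:ℝ)..t, (Ω₀, η₀).1 * sigmoid (Yproc (Ω₀, η₀).2 x s)) ≤ 2*Ω₀*t := by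
      simp only []
      have h30 : 0 ≤ ∫ s in (0:ℝ)..t, Ω₀ * sigmoid (Yproc η₀ x s) := by
        apply intervalIntegral.integral_nonneg ht
        intro s _
        have := sigmoid_pos (Yproc η₀ x s); positivity
      have h31 : (∫ s in (0:ℝ)..t, θ.1 * sigmoid (Yproc θ.2 x s)) ≤ t * θ.1 := by
        calc (∫ s in (0:ℝ)..t, θ.1 * sigmoid (Yproc θ.2 x s)) ≤ ∫ _s in (0:ℝ)..t, θ.1 := by
              apply intervalIntegral.integral_mono_on ht hintθ intervalIntegrable_const
              intro s _
              nlinarith [sigmoid_le_one (Yproc θ.2 x s), sigmoid_pos (Yproc θ.2 x s), hθ1]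
          _ = t * θ.1 := by rw [intervalIntegral.integral_const, smul_eq_mul]; ring
      have hθ2 : θ.1 ≤ 2*Ω₀ := by nlinarith
      nlinarith
    have hd0 : (0:ℝ) ≤ (d:ℝ) := Nat.cast_nonneg d
    have hterm2 : Real.log (sigmoid (Yproc (Ω₀, η₀).2 x t))
        - Real.log (sigmoid (Yproc θ.2 x t)) ≤ t := by linarith
    have hprod : (0:ℝ) ≤ δ * Ω₀ * ((d:ℝ)+2) * t :=
      mul_nonneg (mul_nonneg (mul_nonneg hδ0.le hΩ₀.le) (by linarith)) ht
    nlinarith [hterm1, hterm2, hterm3]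

lemma lint_meas {d : ℕ} (θ : ℝ × (Fin (d + 1) → ℝ → ℝ))
    (hθ : ∀ j, ContinuousOn (θ.2 j) (Set.Ici 0)) (s : Set ℝ) (hs : MeasurableSet s) :
    Measurable (fun x : Fin d → ℝ => ∫⁻ t in s, ENNReal.ofReal (t * dens θ x t) ∂volume) := by
  classical
  have hm : Measurable (fun p : (Fin d → ℝ) × ℝ => ENNReal.ofReal (p.2 * dens θ p.1 p.2)) :=
    (measurable_snd.mul (dens_measurable_prod θ hθ)).ennreal_ofReal
  have hjm : Measurable (fun p : (Fin d → ℝ) × ℝ =>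
      s.indicator (fun t => ENNReal.ofReal (t * dens θ p.1 t)) p.2) := by
    have heq : (fun p : (Fin d → ℝ) × ℝ =>
        s.indicator (fun t => ENNReal.ofReal (t * dens θ p.1 t)) p.2)
        = fun p => if p.2 ∈ s then ENNReal.ofReal (p.2 * dens θ p.1 p.2) else 0 := by
      ext p; rw [Set.indicator_apply]
    rw [heq]
    exact Measurable.ite (measurable_snd hs) hm measurable_const
  have h3 : (fun x : Fin d → ℝ => ∫⁻ t in s, ENNReal.ofReal (t * dens θ x t) ∂volume)
      = fun x => ∫⁻ t, s.indicator (fun t => ENNReal.ofReal (t * dens θ x t)) t ∂volume := by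
    ext x; rw [lintegral_indicator hs]
  rw [h3]
  exact Measurable.lintegral_prod_right' hjm

/-- Lemma 5 of the paper (random design): under (A3), for every `ε ∈ (0,1)` there are
`δ(ε) ∈ (0,1/2)` and `τ(ε) > 1` such that for every `τ ≥ τ(ε)` and every `θ ∈ B_{δ(ε),τ}`,
the Kullback–Leibler divergence `E_{θ₀}[log (f_X(T,θ₀)/f_X(T,θ))] < ε`. -/
theorem KL_neighbourhood_random_design
    {d : ℕ} (hd1 : 1 ≤ d)
    (Ω₀ : ℝ) (hΩ₀ : 0 < Ω₀)
    (η₀ : Fin (d + 1) → ℝ → ℝ)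
    (hη₀cont : ∀ j, ContinuousOn (η₀ j) (Set.Ici 0))
    (Q : Measure (Fin d → ℝ)) [IsProbabilityMeasure Q]
    (hQsupp : Q (unitCube d) = 1)
    (hdens₀ : ∀ x ∈ unitCube d, ∫ t, dens (Ω₀, η₀) x t = 1)
    (hA3 : (∫⁻ x, ∫⁻ t in Set.Ici (0:ℝ),
        ENNReal.ofReal (t * dens (Ω₀, η₀) x t) ∂volume ∂Q) < ⊤) :
    ∀ ε ∈ Set.Ioo (0:ℝ) 1, ∃ δ ∈ Set.Ioo (0:ℝ) (1/2), ∃ τ₀ > (1:ℝ), ∀ τ : ℝ, τ₀ ≤ τ →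
      ∀ θ : ℝ × (Fin (d + 1) → ℝ → ℝ), 0 < θ.1 →
        (∀ j, ContinuousOn (θ.2 j) (Set.Ici 0)) →
        memB Ω₀ η₀ δ τ θ →
        (∫ x, (∫ t in Set.Ici (0:ℝ),
            Real.log (dens (Ω₀, η₀) x t / dens θ x t) * dens (Ω₀, η₀) x t) ∂Q) < ε := by
  intro ε hε
  obtain ⟨hε0, hε1⟩ := hε
  have hθ₀cont : ∀ j, ContinuousOn ((Ω₀, η₀).2 j) (Set.Ici 0) := hη₀cont
  set φ : (Fin d → ℝ) → ℝ≥0∞ := fun x =>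
    ∫⁻ t in Set.Ici (0:ℝ), ENNReal.ofReal (t * dens (Ω₀, η₀) x t) ∂volume with hφdef
  have hφmeas : Measurable φ := lint_meas (Ω₀, η₀) hθ₀cont _ measurableSet_Ici
  have hA3' : ∫⁻ x, φ x ∂Q ≠ ⊤ := hA3.ne
  have haefin : ∀ᵐ x ∂Q, φ x < ⊤ := ae_lt_top hφmeas hA3'
  have haecube : ∀ᵐ x ∂Q, x ∈ unitCube d := by
    have hmeas : MeasurableSet (unitCube d) :=
      MeasurableSet.univ_pi fun _ => measurableSet_Icc
    rw [ae_iff]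
    have h1 : {x : Fin d → ℝ | ¬ x ∈ unitCube d} = (unitCube d)ᶜ := rfl
    rw [h1, measure_compl hmeas (measure_ne_top Q _), hQsupp, measure_univ, tsub_self]
  set m : ℝ := (∫⁻ x, φ x ∂Q).toReal with hmdef
  have hm0 : 0 ≤ m := ENNReal.toReal_nonneg
  have hd0 : (0:ℝ) ≤ (d:ℝ) := Nat.cast_nonneg d
  set K : ℝ := ((d:ℝ)+3) + Ω₀*((d:ℝ)+2)*m with hKdef
  have hK0 : 0 < K := by rw [hKdef]; positivity
  set δ : ℝ := min (1/4) (ε / (2*(K + 1))) with hδdef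
  have hδpos : 0 < δ := lt_min (by norm_num) (by positivity)
  have hδlt : δ < 1/2 := lt_of_le_of_lt (min_le_left _ _) (by norm_num)
  set ψ : ℝ → (Fin d → ℝ) → ℝ≥0∞ := fun τ x =>
    ∫⁻ t in Set.Ioi τ, ENNReal.ofReal (t * dens (Ω₀, η₀) x t) ∂volume with hψdef
  have hψmeas : ∀ τ : ℝ, Measurable (ψ τ) :=
    fun τ => lint_meas (Ω₀, η₀) hθ₀cont _ measurableSet_Ioi
  have hψleφ : ∀ τ : ℝ, 0 ≤ τ → ∀ x, ψ τ x ≤ φ x := by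
    intro τ hτ x
    exact lintegral_mono' (Measure.restrict_mono
      (fun t htt => le_trans hτ (le_of_lt htt)) le_rfl) le_rfl
  have htail : Tendsto (fun n : ℕ => ∫⁻ x, ψ (n:ℝ) x ∂Q) atTop (𝓝 0) := by
    have h0 : (0:ℝ≥0∞) = ∫⁻ _x, 0 ∂Q := by rw [lintegral_zero]
    rw [h0]
    apply tendsto_lintegral_of_dominated_convergence φ (fun n => hψmeas _)
      (fun n => Filter.Eventually.of_forall (fun x => hψleφ _ (Nat.cast_nonneg n) x)) hA3'
    filter_upwards [haefin] with x hx
    have hrw : ∀ n : ℕ, ψ (n:ℝ) x = ∫⁻ t in Set.Ici (0:ℝ),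
        (Set.Ioi ((n:ℝ))).indicator (fun t => ENNReal.ofReal (t * dens (Ω₀, η₀) x t)) t
          ∂volume := by
      intro n
      have hint_eq : Set.Ioi ((n:ℝ)) ∩ Set.Ici (0:ℝ) = Set.Ioi ((n:ℝ)) :=
        Set.inter_eq_left.mpr (fun t htt => Set.mem_Ici.2 (le_trans (Nat.cast_nonneg n) (le_of_lt (Set.mem_Ioi.1 htt))))
      rw [lintegral_indicator measurableSet_Ioi,
        Measure.restrict_restrict measurableSet_Ioi, hint_eq]
    simp_rw [hrw]
    have h0' : (0:ℝ≥0∞) = ∫⁻ _t in Set.Ici (0:ℝ), 0 ∂volume := by rw [lintegral_zero]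
    rw [h0']
    apply tendsto_lintegral_of_dominated_convergence
      (fun t => ENNReal.ofReal (t * dens (Ω₀, η₀) x t))
      (fun n => ((measurable_id.mul (dens_measurable (Ω₀, η₀) hθ₀cont x)).ennreal_ofReal).indicator
        measurableSet_Ioi)
      (fun n => Filter.Eventually.of_forall (fun t => Set.indicator_le_self _ _ t)) hx.ne
    apply Filter.Eventually.of_forall
    intro t
    have hev : ∀ᶠ n : ℕ in atTop,
        (Set.Ioi ((n:ℝ))).indicator (fun t => ENNReal.ofReal (t * dens (Ω₀, η₀) x t)) t = 0 := by
      obtain ⟨N, hN⟩ := exists_nat_gt t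
      rw [eventually_atTop]
      refine ⟨N, fun n hn => Set.indicator_of_notMem ?_ _⟩
      simp only [Set.mem_Ioi, not_lt]
      calc t ≤ (N:ℝ) := hN.le
        _ ≤ (n:ℝ) := Nat.cast_le.2 hn
    exact Tendsto.congr' (hev.mono fun n hn => hn.symm) tendsto_const_nhds
  have hCc : (0:ℝ) < 1 + 2*Ω₀ := by positivity
  obtain ⟨N, hN⟩ : ∃ N : ℕ, ∫⁻ x, ψ (N:ℝ) x ∂Q ≤ ENNReal.ofReal (ε/(4*(1+2*Ω₀))) := by
    rw [ENNReal.tendsto_atTop_zero] at htail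
    obtain ⟨N, hN⟩ := htail (ENNReal.ofReal (ε/(4*(1+2*Ω₀))))
      (ENNReal.ofReal_pos.2 (by positivity))
    exact ⟨N, hN N le_rfl⟩
  refine ⟨δ, ⟨hδpos, hδlt⟩, max (N:ℝ) 2,
    lt_of_lt_of_le one_lt_two (le_max_right _ _), ?_⟩
  intro τ hττ θ hθ1 hθcont hBmem
  have hτ2 : 2 ≤ τ := le_trans (le_max_right _ _) hττ
  have hτN : (N:ℝ) ≤ τ := le_trans (le_max_left _ _) hττ
  have hτ0 : (0:ℝ) ≤ τ := by linarith
  have hψτleφ : ∀ x, ψ τ x ≤ φ x := hψleφ τ hτ0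
  have hψτleN : ∀ x, ψ τ x ≤ ψ (N:ℝ) x := by
    intro x
    exact lintegral_mono' (Measure.restrict_mono
      (fun t htt => lt_of_le_of_lt hτN htt) le_rfl) le_rfl
  set M : (Fin d → ℝ) → ℝ := fun x =>
    δ*((d:ℝ)+3) + δ*(Ω₀*((d:ℝ)+2))*(φ x).toReal + (1+2*Ω₀)*(ψ τ x).toReal with hMdef
  have hψτfin : ∫⁻ x, ψ τ x ∂Q ≠ ⊤ :=
    ne_top_of_le_ne_top hA3' (lintegral_mono hψτleφ)
  have hMint : Integrable M Q := by
    apply Integrable.add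
    apply Integrable.add
    · exact integrable_const _
    · exact (integrable_toReal_of_lintegral_ne_top hφmeas.aemeasurable hA3').const_mul _
    · exact (integrable_toReal_of_lintegral_ne_top (hψmeas τ).aemeasurable hψτfin).const_mul _
  have hae : ∀ᵐ x ∂Q, (∫ t in Set.Ici (0:ℝ),
      Real.log (dens (Ω₀, η₀) x t / dens θ x t) * dens (Ω₀, η₀) x t) ≤ M x := by
    filter_upwards [haecube, haefin] with x hxc hxf
    have hxmem : ∀ j, x j ∈ Set.Icc (0:ℝ) 1 := fun j => hxc j (Set.mem_univ j)
    have hFmeas : Measurable (fun t => dens (Ω₀, η₀) x t) :=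
      dens_measurable (Ω₀, η₀) hθ₀cont x
    have hFnonneg : ∀ t, 0 ≤ dens (Ω₀, η₀) x t := dens_nonneg (Ω₀, η₀) hΩ₀.le x
    have hnn : (0:ℝ → ℝ) ≤ᵐ[volume.restrict (Set.Ici (0:ℝ))]
        fun t => t * dens (Ω₀, η₀) x t :=
      (ae_restrict_iff' measurableSet_Ici).2
        (Filter.Eventually.of_forall fun t htt => mul_nonneg htt (hFnonneg t))
    have hintF1 : ∫ t in Set.Ici (0:ℝ), dens (Ω₀, η₀) x t = 1 := by
      rw [setIntegral_eq_integral_of_forall_compl_eq_zero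
        (fun t htt => by rw [dens, if_neg (by simpa using htt)])]
      exact hdens₀ x hxc
    have hFint : IntegrableOn (fun t => dens (Ω₀, η₀) x t) (Set.Ici 0) volume := by
      by_contra hcon
      rw [MeasureTheory.integral_undef hcon] at hintF1
      norm_num at hintF1
    have htFint : IntegrableOn (fun t => t * dens (Ω₀, η₀) x t) (Set.Ici 0) volume := by
      constructor
      · exact (measurable_id.mul hFmeas).aestronglyMeasurable
      · rw [hasFiniteIntegral_iff_ofReal hnn]
        exact hxf
    have huint : IntegrableOn (fun t => (δ*((d:ℝ)+3)) * dens (Ω₀, η₀) x t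
        + (δ*(Ω₀*((d:ℝ)+2))) * (t * dens (Ω₀, η₀) x t)
        + (1+2*Ω₀) * (Set.Ioi τ).indicator (fun s => s * dens (Ω₀, η₀) x s) t)
        (Set.Ici 0) volume := by
      apply Integrable.add
      apply Integrable.add
      · exact hFint.const_mul _
      · exact htFint.const_mul _
      · exact (htFint.indicator measurableSet_Ioi).const_mul _
    have hptwise : ∀ t ∈ Set.Ici (0:ℝ),
        Real.log (dens (Ω₀, η₀) x t / dens θ x t) * dens (Ω₀, η₀) x t ≤
        (δ*((d:ℝ)+3)) * dens (Ω₀, η₀) x t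
          + (δ*(Ω₀*((d:ℝ)+2))) * (t * dens (Ω₀, η₀) x t)
          + (1+2*Ω₀) * (Set.Ioi τ).indicator (fun s => s * dens (Ω₀, η₀) x s) t := by
      intro t htt
      have hpb := pointwise_bound hΩ₀ hη₀cont hδpos hδlt hτ2 θ hθ1 hθcont hBmem hxmem htt
      have hb2 : Real.log (dens (Ω₀, η₀) x t / dens θ x t) * dens (Ω₀, η₀) x t ≤
          (δ * (((d:ℝ)+3) + Ω₀*((d:ℝ)+2) * t)
            + Set.indicator (Set.Ioi τ) (fun s => (1+2*Ω₀) * s) t) * dens (Ω₀, η₀) x t :=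
        mul_le_mul_of_nonneg_right hpb (hFnonneg t)
      refine le_trans hb2 (le_of_eq ?_)
      by_cases hmem : t ∈ Set.Ioi τ
      · rw [Set.indicator_of_mem hmem, Set.indicator_of_mem hmem]; ring
      · rw [Set.indicator_of_notMem hmem, Set.indicator_of_notMem hmem]; ring
    have he2 : ∫ t in Set.Ici (0:ℝ), t * dens (Ω₀, η₀) x t = (φ x).toReal := by
      rw [integral_eq_lintegral_of_nonneg_ae hnn
        (measurable_id.mul hFmeas).aestronglyMeasurable]
    have he3 : ∫ t in Set.Ici (0:ℝ),
        (Set.Ioi τ).indicator (fun s => s * dens (Ω₀, η₀) x s) t = (ψ τ x).toReal := by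
      rw [setIntegral_indicator measurableSet_Ioi]
      have hss : Set.Ici (0:ℝ) ∩ Set.Ioi τ = Set.Ioi τ :=
        Set.inter_eq_right.mpr (fun t htt => le_trans hτ0 (le_of_lt htt))
      rw [hss]
      have hnn' : (0:ℝ → ℝ) ≤ᵐ[volume.restrict (Set.Ioi τ)]
          fun t => t * dens (Ω₀, η₀) x t :=
        (ae_restrict_iff' measurableSet_Ioi).2
          (Filter.Eventually.of_forall fun t htt =>
            mul_nonneg (le_trans hτ0 (le_of_lt htt)) (hFnonneg t))
      rw [integral_eq_lintegral_of_nonneg_ae hnn'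
        (measurable_id.mul hFmeas).aestronglyMeasurable]
    by_cases hgi : IntegrableOn
        (fun t => Real.log (dens (Ω₀, η₀) x t / dens θ x t) * dens (Ω₀, η₀) x t)
        (Set.Ici 0) volume
    · have hle := setIntegral_mono_on hgi huint measurableSet_Ici hptwise
      refine le_trans hle (le_of_eq ?_)
      have hi1 : Integrable (fun t => (δ*((d:ℝ)+3)) * dens (Ω₀, η₀) x t)
          (volume.restrict (Set.Ici 0)) := hFint.const_mul _
      have hi2 : Integrable (fun t => (δ*(Ω₀*((d:ℝ)+2))) * (t * dens (Ω₀, η₀) x t))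
          (volume.restrict (Set.Ici 0)) := htFint.const_mul _
      have hi3 : Integrable (fun t =>
          (1+2*Ω₀) * (Set.Ioi τ).indicator (fun s => s * dens (Ω₀, η₀) x s) t)
          (volume.restrict (Set.Ici 0)) := (htFint.indicator measurableSet_Ioi).const_mul _
      have hi12 : Integrable (fun t => (δ*((d:ℝ)+3)) * dens (Ω₀, η₀) x t
          + (δ*(Ω₀*((d:ℝ)+2))) * (t * dens (Ω₀, η₀) x t))
          (volume.restrict (Set.Ici 0)) := hi1.add hi2
      rw [integral_add hi12 hi3, integral_add hi1 hi2,
        integral_const_mul, integral_const_mul, integral_const_mul,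
        hintF1, he2, he3]
      simp only [hMdef]
      ring
    · rw [MeasureTheory.integral_undef hgi]
      have t1 : (0:ℝ) ≤ δ*((d:ℝ)+3) := by positivity
      have t2 : (0:ℝ) ≤ δ*(Ω₀*((d:ℝ)+2))*(φ x).toReal :=
        mul_nonneg (by positivity) ENNReal.toReal_nonneg
      have t3 : (0:ℝ) ≤ (1+2*Ω₀)*(ψ τ x).toReal :=
        mul_nonneg (by positivity) ENNReal.toReal_nonneg
      rw [hMdef]
      dsimp only
      linarith
  by_cases hIint : Integrable (fun x => ∫ t in Set.Ici (0:ℝ),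
      Real.log (dens (Ω₀, η₀) x t / dens θ x t) * dens (Ω₀, η₀) x t) Q
  · have hle := integral_mono_ae hIint hMint hae
    have haefinψ : ∀ᵐ x ∂Q, ψ τ x < ⊤ :=
      haefin.mono fun x hx => lt_of_le_of_lt (hψτleφ x) hx
    have heM : ∫ x, M x ∂Q = δ*((d:ℝ)+3) + δ*(Ω₀*((d:ℝ)+2))*m
        + (1+2*Ω₀)*(∫⁻ x, ψ τ x ∂Q).toReal := by
      have hj1 : Integrable (fun _x : Fin d → ℝ => δ*((d:ℝ)+3)) Q := integrable_const _
      have hj2 : Integrable (fun x => δ*(Ω₀*((d:ℝ)+2))*(φ x).toReal) Q :=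
        (integrable_toReal_of_lintegral_ne_top hφmeas.aemeasurable hA3').const_mul _
      have hj3 : Integrable (fun x => (1+2*Ω₀)*(ψ τ x).toReal) Q :=
        (integrable_toReal_of_lintegral_ne_top (hψmeas τ).aemeasurable hψτfin).const_mul _
      have hj12 : Integrable (fun x => δ*((d:ℝ)+3) + δ*(Ω₀*((d:ℝ)+2))*(φ x).toReal) Q :=
        hj1.add hj2
      simp only [hMdef]
      rw [integral_add hj12 hj3, integral_add hj1 hj2,
        integral_const, integral_const_mul, integral_const_mul,
        integral_toReal hφmeas.aemeasurable haefin,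
        integral_toReal (hψmeas τ).aemeasurable haefinψ,
        probReal_univ, hmdef]
      simp
    have htail2 : (∫⁻ x, ψ τ x ∂Q).toReal ≤ ε/(4*(1+2*Ω₀)) := by
      have hle2 : ∫⁻ x, ψ τ x ∂Q ≤ ENNReal.ofReal (ε/(4*(1+2*Ω₀))) :=
        le_trans (lintegral_mono hψτleN) hN
      exact ENNReal.toReal_le_of_le_ofReal (by positivity) hle2
    have hCcT : (1+2*Ω₀)*(∫⁻ x, ψ τ x ∂Q).toReal ≤ ε/4 := by
      have h := mul_le_mul_of_nonneg_left htail2 hCc.le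
      have heq : (1+2*Ω₀) * (ε/(4*(1+2*Ω₀))) = ε/4 := by
        field_simp
      linarith
    have hδle : δ * (2*(K+1)) ≤ ε := by
      have h1 : δ ≤ ε / (2*(K + 1)) := min_le_right _ _
      exact (le_div_iff₀ (by positivity)).1 h1
    calc (∫ x, (∫ t in Set.Ici (0:ℝ),
            Real.log (dens (Ω₀, η₀) x t / dens θ x t) * dens (Ω₀, η₀) x t) ∂Q)
        ≤ ∫ x, M x ∂Q := hle
      _ = δ*((d:ℝ)+3) + δ*(Ω₀*((d:ℝ)+2))*m
          + (1+2*Ω₀)*(∫⁻ x, ψ τ x ∂Q).toReal := heM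
      _ < ε := by
          have hKexp : δ*((d:ℝ)+3) + δ*(Ω₀*((d:ℝ)+2))*m = δ*K := by rw [hKdef]; ring
          nlinarith [hδpos, hK0]
  · rw [MeasureTheory.integral_undef hIint]
    linarith

end
end

section
/- Let τ > 0 and let η be a continuous real-valued function on the interval [0,τ]. For n ≥ 1 and k ∈ {0,…,2^n}, set t^n_k = kτ/2^n. Then sup_{t∈[0,τ]} |η(t)| ≤ |η(0)| + |η(τ)| + Σ_{n=1}^∞ max_{0≤k≤2^n−1} |η(t^n_{k+1}) − η(t^n_k)|, where the right-hand side is allowed to equal +∞. -/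
open scoped ENNReal NNReal

noncomputable section

/-- Dyadic chaining bound: for `η` continuous on `[0,τ]`, with dyadic points
`t^n_k = kτ/2^n`, one has
`sup_{t∈[0,τ]} |η(t)| ≤ |η(0)| + |η(τ)| + ∑_{n≥1} max_{0≤k≤2^n-1} |η(t^n_{k+1}) - η(t^n_k)|`,
the inequality being stated in `ℝ≥0∞` so that the right-hand side may equal `+∞`. -/
theorem sup_le_dyadic_increments
    (τ : ℝ) (hτ : 0 < τ) (η : ℝ → ℝ) (hcont : ContinuousOn η (Set.Icc 0 τ)) :
    (⨆ t : Set.Icc (0:ℝ) τ, (‖η (t : ℝ)‖₊ : ℝ≥0∞)) ≤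
      (‖η 0‖₊ : ℝ≥0∞) + (‖η τ‖₊ : ℝ≥0∞) +
      ∑' n : ℕ, ⨆ k : Fin (2^(n+1)),
        (‖η (((k : ℕ) + 1) * τ / 2^(n+1)) - η ((k : ℕ) * τ / 2^(n+1))‖₊ : ℝ≥0∞) := by
  set M : ℕ → ℝ≥0∞ := fun n => ⨆ k : Fin (2^(n+1)),
        (‖η (((k : ℕ) + 1) * τ / 2^(n+1)) - η ((k : ℕ) * τ / 2^(n+1))‖₊ : ℝ≥0∞) with hM
  apply iSup_le
  rintro ⟨t, ht0, htτ⟩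
  dsimp only
  -- dyadic approximations
  set a : ℕ → ℕ := fun n => ⌊t * 2^n / τ⌋₊ with ha
  set p : ℕ → ℝ := fun n => (a n : ℝ) * τ / 2^n with hp
  have hxnn : ∀ n : ℕ, 0 ≤ t * 2^n / τ := fun n => by positivity
  have hple : ∀ n, p n ≤ t := by
    intro n
    have h1 : (a n : ℝ) ≤ t * 2^n / τ := Nat.floor_le (hxnn n)
    have h2 : (a n : ℝ) * τ ≤ t * 2^n := by rwa [le_div_iff₀ hτ] at h1
    have h2n : (0:ℝ) < 2^n := by positivity
    rw [hp]; dsimp only; rw [div_le_iff₀ h2n]; exact h2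
  have hage : ∀ n, t < p n + τ / 2^n := by
    intro n
    have h1 : t * 2^n / τ < (a n : ℝ) + 1 := Nat.lt_floor_add_one _
    have h2 : t * 2^n < ((a n : ℝ) + 1) * τ := by
      rw [div_lt_iff₀ hτ] at h1; linarith
    have h2n : (0:ℝ) < 2^n := by positivity
    rw [hp]
    rw [← add_div, lt_div_iff₀ h2n]
    nlinarith
  have hamax : ∀ n, a n ≤ 2^n := by
    intro n
    have h1 : t * 2^n / τ ≤ (2^n : ℝ) := by
      rw [div_le_iff₀ hτ]
      nlinarith [pow_pos (show (0:ℝ) < 2 by norm_num) n]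
    have h2 := Nat.floor_le_floor (R := ℝ) h1
    have h3 : ⌊((2:ℝ)^n)⌋₊ = 2^n := by
      rw [show ((2:ℝ)^n) = ((2^n : ℕ) : ℝ) by push_cast; ring, Nat.floor_natCast]
    rw [h3] at h2
    exact h2
  have hpmem : ∀ n, p n ∈ Set.Icc (0:ℝ) τ := by
    intro n
    refine ⟨by positivity, (hple n).trans htτ⟩
  -- recursion on a
  have hstepa : ∀ n, a (n+1) = 2 * a n ∨ a (n+1) = 2 * a n + 1 := by
    intro n
    have hx : t * 2^(n+1) / τ = 2 * (t * 2^n / τ) := by ring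
    have hlo : 2 * a n ≤ a (n+1) := by
      rw [ha]
      apply Nat.le_floor
      rw [hx]
      push_cast
      nlinarith [Nat.floor_le (hxnn n)]
    have hhi : a (n+1) < 2 * a n + 2 := by
      rw [ha]
      rw [Nat.floor_lt (hxnn (n+1)), hx]
      push_cast
      nlinarith [Nat.lt_floor_add_one (t * 2^n / τ)]
    omega
  -- one-step increment bound
  have hstep : ∀ n, (‖η (p (n+1))‖₊ : ℝ≥0∞) ≤ (‖η (p n)‖₊ : ℝ≥0∞) + M n := by
    intro n
    have htriangle : (‖η (p (n+1))‖₊ : ℝ≥0∞) ≤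
        (‖η (p n)‖₊ : ℝ≥0∞) + (‖η (p (n+1)) - η (p n)‖₊ : ℝ≥0∞) := by
      rw [← ENNReal.coe_add]
      exact_mod_cast nnnorm_le_insert' _ _
    refine htriangle.trans (add_le_add_right ?_ _)
    rcases hstepa n with h | h
    · have : p (n+1) = p n := by
        rw [hp]; dsimp only; rw [h]
        push_cast
        field_simp
        ring
      rw [this]
      simp
    · have hk : 2 * a n < 2^(n+1) := by
        have := hamax (n+1)
        omega
      have h1 : p (n+1) = ((2 * a n : ℕ) + 1 : ℝ) * τ / 2^(n+1) := by
        rw [hp]; dsimp only; rw [h]; push_cast; ring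
      have h2 : p n = ((2 * a n : ℕ) : ℝ) * τ / 2^(n+1) := by
        rw [hp]; dsimp only
        push_cast
        field_simp
        ring
      rw [h1, h2, hM]
      exact le_iSup (fun k : Fin (2^(n+1)) =>
        (‖η (((k : ℕ) + 1) * τ / 2^(n+1)) - η ((k : ℕ) * τ / 2^(n+1))‖₊ : ℝ≥0∞))
        ⟨2 * a n, hk⟩
  -- bound by partial sums
  have hbound : ∀ m, (‖η (p m)‖₊ : ℝ≥0∞) ≤
      (‖η 0‖₊ : ℝ≥0∞) + (‖η τ‖₊ : ℝ≥0∞) + ∑ j ∈ Finset.range m, M j := by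
    intro m
    induction m with
    | zero =>
      have h0 : a 0 ≤ 1 := by simpa using hamax 0
      have : p 0 = 0 ∨ p 0 = τ := by
        interval_cases h : a 0
        · left; rw [hp]; dsimp only; rw [h]; simp
        · right; rw [hp]; dsimp only; rw [h]; simp
      simp only [Finset.range_zero, Finset.sum_empty, add_zero]
      rcases this with h | h <;> rw [h]
      · exact le_add_right le_rfl
      · exact le_add_left le_rfl
    | succ m ih =>
      calc (‖η (p (m+1))‖₊ : ℝ≥0∞) ≤ (‖η (p m)‖₊ : ℝ≥0∞) + M m := hstep m
        _ ≤ ((‖η 0‖₊ : ℝ≥0∞) + (‖η τ‖₊ : ℝ≥0∞) + ∑ j ∈ Finset.range m, M j) + M m :=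
            add_le_add_left ih _
        _ = (‖η 0‖₊ : ℝ≥0∞) + (‖η τ‖₊ : ℝ≥0∞) + ∑ j ∈ Finset.range (m+1), M j := by
            rw [Finset.sum_range_succ]; ring
  have hbound' : ∀ m, (‖η (p m)‖₊ : ℝ≥0∞) ≤
      (‖η 0‖₊ : ℝ≥0∞) + (‖η τ‖₊ : ℝ≥0∞) + ∑' n, M n := by
    intro m
    exact (hbound m).trans (add_le_add_right (ENNReal.sum_le_tsum _) _)
  -- convergence p m → t
  have hptend : Filter.Tendsto p Filter.atTop (nhds t) := by
    rw [tendsto_iff_dist_tendsto_zero]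
    have hdist : ∀ n, dist (p n) t ≤ τ / 2^n := by
      intro n
      rw [Real.dist_eq, abs_le]
      constructor
      · have := hage n
        have h2n : (0:ℝ) < 2^n := by positivity
        linarith
      · have := hple n
        have : p n - t ≤ 0 := by linarith
        have h2n : (0:ℝ) ≤ τ / 2^n := by positivity
        linarith
    have hlim : Filter.Tendsto (fun n : ℕ => τ / 2^n) Filter.atTop (nhds 0) :=
      Filter.Tendsto.div_atTop tendsto_const_nhds
        (tendsto_pow_atTop_atTop_of_one_lt (by norm_num : (1:ℝ) < 2))
    exact squeeze_zero (fun n => dist_nonneg) hdist hlim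
  have htmem : t ∈ Set.Icc (0:ℝ) τ := ⟨ht0, htτ⟩
  have hηtend : Filter.Tendsto (fun m => η (p m)) Filter.atTop (nhds (η t)) := by
    apply (hcont t htmem).tendsto.comp
    rw [tendsto_nhdsWithin_iff]
    exact ⟨hptend, Filter.Eventually.of_forall hpmem⟩
  have hfinal : Filter.Tendsto (fun m => (‖η (p m)‖₊ : ℝ≥0∞)) Filter.atTop
      (nhds (‖η t‖₊ : ℝ≥0∞)) :=
    ENNReal.tendsto_coe.2 hηtend.nnnorm
  exact le_of_tendsto hfinal (Filter.Eventually.of_forall hbound')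

end
end

section
/- Let (η(t))_{t≥0} be a stochastic process on a probability space with almost surely continuous sample paths whose finite-dimensional distributions are centered (mean-zero) Gaussian with covariance Cov(η(s),η(t)) = κ(|s−t|) for a stationary covariance function κ, and assume (A1): (κ(0) − κ(2^{−n}))^{−1} ≥ n^6 for all integers n ≥ 1. Then for every M > 0 and every integer d ≥ 1 there exist τ* > 1 and positive constants K₁, K₂ (depending only on d, M and κ) such that for all τ > τ*, P( sup_{t≥τ} |η(t) h_d(t)| ≥ M ) ≤ Σ_{j=0}^∞ K₁ exp(−K₂ (τ+j)²); moreover, the right-hand side tends to 0 as τ → ∞. -/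
open MeasureTheory ProbabilityTheory Filter Topology
open scoped ENNReal NNReal

noncomputable section

section Aux
open Real

lemma sum_inv_sq_le (n : ℕ) : ∑ m ∈ Finset.range n, (1:ℝ)/((m:ℝ)+1)^2 ≤ 2 := by
  have key : ∀ n : ℕ, ∑ m ∈ Finset.range (n+1), (1:ℝ)/((m:ℝ)+1)^2 ≤ 2 - 1/((n:ℝ)+1) := by
    intro n
    induction n with
    | zero => norm_num
    | succ n ih =>
      rw [Finset.sum_range_succ]
      have h1 : (0:ℝ) < (n:ℝ)+1 := by positivity
      have h2 : (0:ℝ) < (n:ℝ)+2 := by positivity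
      push_cast
      have hrw : ((n:ℝ)+1+1) = (n:ℝ)+2 := by ring
      rw [hrw]
      have h3 : (1:ℝ)/((n:ℝ)+2)^2 ≤ 1/((n:ℝ)+1) - 1/((n:ℝ)+2) := by
        rw [div_sub_div _ _ (ne_of_gt h1) (ne_of_gt h2)]
        rw [div_le_div_iff₀ (by positivity) (by positivity)]
        ring_nf; nlinarith [sq_nonneg ((n:ℝ)+1)]
      push_cast at ih
      linarith
  cases n with
  | zero => simp
  | succ n =>
    refine (key n).trans ?_
    have h : (0:ℝ) < 1/((n:ℝ)+1) := by positivity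
    linarith

lemma exp_one_ge_two : (2:ℝ) ≤ Real.exp 1 := by
  have := Real.add_one_le_exp (1:ℝ); linarith

lemma log_one_sub_exp_ge {t : ℝ} (ht : 2 ≤ t) :
    -(t/2) ≤ Real.log (1 - Real.exp (-t)) := by
  have h1 : Real.exp (-t) ≤ 1/2 := by
    have h : Real.exp (-t) ≤ Real.exp (-2) := by
      apply Real.exp_le_exp.2; linarith
    refine h.trans ?_
    rw [Real.exp_neg, inv_le_comm₀ (Real.exp_pos 2) (by norm_num)]
    have := Real.add_one_le_exp (2:ℝ); norm_num; linarith
  have h2 : Real.exp (-(t/2)) ≤ 1/2 := by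
    have h : Real.exp (-(t/2)) ≤ Real.exp (-1) := by
      apply Real.exp_le_exp.2; linarith
    refine h.trans ?_
    rw [Real.exp_neg, inv_le_comm₀ (Real.exp_pos 1) (by norm_num)]
    norm_num; exact exp_one_ge_two
  have hpos : (0:ℝ) < 1 - Real.exp (-t) := by linarith
  rw [Real.le_log_iff_exp_le hpos]
  linarith

lemma exp_neg_one_lt_half : Real.exp (-1) < 1/2 := by
  rw [Real.exp_neg, inv_lt_comm₀ (Real.exp_pos 1) (by norm_num)]
  norm_num
  have := Real.exp_one_gt_d9; linarith

lemma denom_pos {t : ℝ} (ht : 1 ≤ t) : 0 < t + Real.log (1 - Real.exp (-t)) := by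
  have h1 := _root_.exp_neg_one_lt_half
  have h2 : Real.exp (-t) ≤ Real.exp (-1) := Real.exp_le_exp.2 (by linarith)
  have hpos1 : (0:ℝ) < 1 - Real.exp (-1) := by linarith
  have hmono : Real.log (1 - Real.exp (-1)) ≤ Real.log (1 - Real.exp (-t)) := by
    apply Real.log_le_log hpos1; linarith
  have hgt : -1 < Real.log (1 - Real.exp (-1)) := by
    rw [Real.lt_log_iff_exp_lt hpos1]
    linarith
  linarith

lemma hfun_eq_of_gt {d : ℕ} {t : ℝ} (h : 1 < t) :
    hfun d t = (d + 1) / (t + Real.log (1 - Real.exp (-t))) := by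
  rw [hfun, if_neg (not_le.2 h)]

lemma hfun_pos {d : ℕ} {t : ℝ} (h : 1 < t) : 0 < hfun d t := by
  rw [hfun_eq_of_gt h]
  exact div_pos (by positivity) (denom_pos h.le)

lemma hfun_continuousAt {d : ℕ} {t : ℝ} (h : 1 < t) : ContinuousAt (hfun d) t := by
  have hev : ∀ᶠ x in 𝓝 t, hfun d x = (d + 1) / (x + Real.log (1 - Real.exp (-x))) := by
    filter_upwards [eventually_gt_nhds h] with x hx
    exact hfun_eq_of_gt hx
  refine ContinuousAt.congr ?_ (hev.mono fun x hx => hx.symm)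
  have hne : 1 - Real.exp (-t) ≠ 0 := by
    have : Real.exp (-t) < 1 := by rw [Real.exp_lt_one_iff]; linarith
    linarith
  have hc2 : ContinuousAt (fun x : ℝ => Real.log (1 - Real.exp (-x))) t :=
    ContinuousAt.comp (g := Real.log) (f := fun x : ℝ => 1 - Real.exp (-x))
      (Real.continuousAt_log hne) (by fun_prop)
  have hd : ContinuousAt (fun x : ℝ => x + Real.log (1 - Real.exp (-x))) t :=
    continuousAt_id.add hc2
  exact continuousAt_const.div hd (ne_of_gt (denom_pos h.le))

lemma aemeasurable_of_map_gaussian {W : Type*} [MeasurableSpace W] {P : Measure W}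
    [IsProbabilityMeasure P] {X : W → ℝ} {v : ℝ≥0}
    (h : Measure.map X P = gaussianReal 0 v) : AEMeasurable X P := by
  by_contra hn
  rw [Measure.map_of_not_aemeasurable hn] at h
  have h1 : (gaussianReal 0 v) Set.univ = 1 := measure_univ
  rw [← h] at h1
  simp at h1

lemma gaussian_tail {W : Type*} [MeasurableSpace W] {P : Measure W}
    [IsProbabilityMeasure P] {X : W → ℝ} {v : ℝ≥0}
    (h : Measure.map X P = gaussianReal 0 v) {u b : ℝ} (hu : 0 < u) (hvu : (v:ℝ) ≤ u)
    (hb : 0 < b) :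
    P {w | b ≤ |X w|} ≤ ENNReal.ofReal (2 * Real.exp (-b^2/(4*u))) := by
  have hXm : AEMeasurable X P := aemeasurable_of_map_gaussian h
  have hsm : MeasurableSet {x : ℝ | b ≤ |x|} := by
    have : {x : ℝ | b ≤ |x|} = (fun x : ℝ => |x|) ⁻¹' Set.Ici b := rfl
    rw [this]
    exact (measurable_id.abs) measurableSet_Ici
  have hmap : P {w | b ≤ |X w|} = (gaussianReal 0 v) {x | b ≤ |x|} := by
    rw [← h, Measure.map_apply_of_aemeasurable hXm hsm]
    rfl
  rw [hmap]
  rcases eq_or_ne v 0 with hv | hv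
  · rw [hv, gaussianReal_zero_var]
    rw [Measure.dirac_apply' _ hsm]
    have h0 : (0:ℝ) ∉ {x : ℝ | b ≤ |x|} := by simp; linarith
    rw [Set.indicator_of_notMem h0]
    exact zero_le
  · rw [gaussianReal_apply_eq_integral 0 hv]
    apply ENNReal.ofReal_le_ofReal
    have hvpos : (0:ℝ) < (v:ℝ) := by
      exact_mod_cast zero_lt_iff.2 hv
    set s : Set ℝ := {x | b ≤ |x|}
    -- pointwise bound on s
    have hpdf_le : ∀ x ∈ s, gaussianPDFReal 0 v x ≤
        (Real.sqrt (2 * π * v))⁻¹ * (Real.exp (-b^2/(4*u)) * Real.exp (-(4*(v:ℝ))⁻¹ * x^2)) := by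
      intro x hx
      rw [gaussianPDFReal]
      simp only [sub_zero]
      apply mul_le_mul_of_nonneg_left _ (by positivity)
      rw [← Real.exp_add]
      apply Real.exp_le_exp.2
      have hx2 : b^2 ≤ x^2 := by
        have : b ≤ |x| := hx
        nlinarith [abs_nonneg x, sq_abs x]
      have h1 : b^2/(4*u) ≤ x^2/(4*(v:ℝ)) := by
        apply div_le_div₀ (by positivity) hx2 (by positivity)
        linarith
      have : -x^2/(2*(v:ℝ)) = (-x^2/(4*(v:ℝ))) + (-x^2/(4*(v:ℝ))) := by ring
      rw [this]
      have h2 : -x^2/(4*(v:ℝ)) ≤ -b^2/(4*u) := by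
        rw [neg_div, neg_div, neg_le_neg_iff]
        exact h1
      have h3 : (-x^2/(4*(v:ℝ))) = -(4*(v:ℝ))⁻¹ * x^2 := by ring
      linarith [h3 ▸ le_refl (-x^2/(4*(v:ℝ)))]
    have hint : Integrable (fun x : ℝ =>
        (Real.sqrt (2 * π * v))⁻¹ * (Real.exp (-b^2/(4*u)) * Real.exp (-(4*(v:ℝ))⁻¹ * x^2))) := by
      apply Integrable.const_mul
      apply Integrable.const_mul
      have : ∀ x : ℝ, Real.exp (-(4*(v:ℝ))⁻¹ * x^2) = Real.exp (-((4*(v:ℝ))⁻¹) * x^2) := by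
        intro x; ring_nf
      exact integrable_exp_neg_mul_sq (by positivity)
    calc ∫ x in s, gaussianPDFReal 0 v x
        ≤ ∫ x in s, (Real.sqrt (2 * π * v))⁻¹ *
            (Real.exp (-b^2/(4*u)) * Real.exp (-(4*(v:ℝ))⁻¹ * x^2)) := by
          apply setIntegral_mono_on
          · exact (integrable_gaussianPDFReal 0 v).integrableOn
          · exact hint.integrableOn
          · exact hsm
          · exact hpdf_le
      _ ≤ ∫ x, (Real.sqrt (2 * π * v))⁻¹ *
            (Real.exp (-b^2/(4*u)) * Real.exp (-(4*(v:ℝ))⁻¹ * x^2)) := by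
          apply setIntegral_le_integral hint
          filter_upwards with x
          positivity
      _ = (Real.sqrt (2 * π * v))⁻¹ * Real.exp (-b^2/(4*u)) *
            ∫ x, Real.exp (-(4*(v:ℝ))⁻¹ * x^2) := by
          rw [MeasureTheory.integral_const_mul, MeasureTheory.integral_const_mul]; ring
      _ ≤ 2 * Real.exp (-b^2/(4*u)) := by
          rw [integral_gaussian]
          have hsq : Real.sqrt (π / (4*(v:ℝ))⁻¹) = Real.sqrt 2 * Real.sqrt (2*π*(v:ℝ)) := by
            rw [← Real.sqrt_mul (by norm_num)]
            congr 1
            field_simp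
            ring
          rw [hsq]
          have hne : Real.sqrt (2*π*(v:ℝ)) ≠ 0 := by
            apply ne_of_gt
            apply Real.sqrt_pos.2
            positivity
          have : (Real.sqrt (2*π*(v:ℝ)))⁻¹ * Real.exp (-b^2/(4*u)) *
              (Real.sqrt 2 * Real.sqrt (2*π*(v:ℝ)))
              = Real.sqrt 2 * Real.exp (-b^2/(4*u)) := by
            field_simp
          rw [this]
          apply mul_le_mul_of_nonneg_right _ (Real.exp_nonneg _)
          have h4 : Real.sqrt 4 = 2 := by
            rw [show (4:ℝ) = 2^2 by norm_num]
            exact Real.sqrt_sq (by norm_num)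
          have := Real.sqrt_le_sqrt (show (2:ℝ) ≤ 4 by norm_num)
          linarith

lemma map_single {W : Type*} [MeasurableSpace W] {P : Measure W}
    {η : ℝ → W → ℝ} {κ : ℝ → ℝ} (hGP : IsCenteredStationaryGP P η κ)
    {s : ℝ} (hs : 0 ≤ s) :
    Measure.map (η s) P = gaussianReal 0 (κ 0).toNNReal := by
  have := hGP.2 1 ![s] ![1] (fun i => by fin_cases i <;> simpa)
  simp only [Fin.sum_univ_one, Matrix.cons_val_zero, one_mul, sub_self, abs_zero] at this
  convert this using 2

lemma map_incr {W : Type*} [MeasurableSpace W] {P : Measure W}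
    {η : ℝ → W → ℝ} {κ : ℝ → ℝ} (hGP : IsCenteredStationaryGP P η κ)
    {s₁ s₂ : ℝ} (hs₁ : 0 ≤ s₁) (hs₂ : 0 ≤ s₂) :
    Measure.map (fun w => η s₁ w - η s₂ w) P =
      gaussianReal 0 (2*(κ 0 - κ |s₁ - s₂|)).toNNReal := by
  have := hGP.2 2 ![s₁, s₂] ![1, -1] (fun i => by fin_cases i <;> simpa)
  simp only [Fin.sum_univ_two, Matrix.cons_val_zero, Matrix.cons_val_one, Matrix.head_cons,
    one_mul, neg_one_mul, neg_mul, mul_one, sub_self, abs_zero, mul_neg, neg_neg] at this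
  have habs : |s₂ - s₁| = |s₁ - s₂| := abs_sub_comm _ _
  rw [habs] at this
  have h2 : (fun w => η s₁ w - η s₂ w) = fun w => η s₁ w + -η s₂ w := by funext w; ring
  rw [h2, this]
  congr 2
  ring

lemma chain_incl {W : Type*} (η : ℝ → W → ℝ) (a c : ℝ) (hc : 0 < c) (ha : 0 ≤ a) :
    {w | ∃ n k : ℕ, k < 2^n ∧ c * a ≤ |η (a + k/2^n) w|} ⊆
      {w | c*a/2 ≤ |η a w|} ∪
      ⋃ (m : ℕ) (k : Fin (2^(m+1))),
        {w | c*a/(4*((m:ℝ)+1)^2) ≤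
          |η (a + ((k:ℕ)+1)/2^(m+1)) w - η (a + (k:ℕ)/2^(m+1)) w|} := by
  intro w hw
  by_contra hout
  simp only [Set.mem_union, Set.mem_iUnion, Set.mem_setOf_eq, not_or, not_exists, not_le] at hout
  obtain ⟨h0, hinc⟩ := hout
  have hca : 0 ≤ c * a := mul_nonneg hc.le ha
  have key : ∀ n : ℕ, ∀ k : ℕ, k < 2^n →
      |η (a + k/2^n) w| ≤ |η a w| + ∑ m ∈ Finset.range n, c*a/(4*((m:ℝ)+1)^2) := by
    intro n
    induction n with
    | zero =>
      intro k hk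
      interval_cases k
      simp
    | succ n ih =>
      intro k hk
      set q := k / 2 with hqdef
      have hq : q < 2^n := by
        rw [hqdef]
        apply Nat.div_lt_of_lt_mul
        rw [← pow_succ']
        exact hk
      have hterm : (0:ℝ) ≤ c*a/(4*((n:ℝ)+1)^2) := by positivity
      have hptq : (((2*q:ℕ)):ℝ)/2^(n+1) = (q:ℝ)/2^n := by
        push_cast
        rw [pow_succ']
        field_simp
      rcases Nat.even_or_odd k with he | ho
      · have hk2 : k = 2 * q := by
          have := Nat.even_iff.mp he
          omega
        rw [hk2]
        rw [show ((2*q : ℕ):ℝ) = ((2*q:ℕ):ℝ) from rfl, hptq]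
        refine (ih q hq).trans ?_
        rw [Finset.sum_range_succ]
        linarith
      · have hk2 : k = 2 * q + 1 := by
          rcases ho with ⟨l, hl⟩
          omega
        have h2q : 2*q < 2^(n+1) := by omega
        have hincr := hinc n ⟨2*q, h2q⟩
        simp only [Fin.val_mk] at hincr
        have hpt1 : (k:ℝ) = ((2*q:ℕ):ℝ) + 1 := by rw [hk2]; push_cast; ring
        have habs : |η (a + (k:ℝ)/2^(n+1)) w| ≤
            |η (a + ((2*q:ℕ):ℝ)/2^(n+1)) w| + c*a/(4*((n:ℝ)+1)^2) := by
          have h1 : |η (a + (k:ℝ)/2^(n+1)) w| - |η (a + ((2*q:ℕ):ℝ)/2^(n+1)) w| ≤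
              |η (a + (k:ℝ)/2^(n+1)) w - η (a + ((2*q:ℕ):ℝ)/2^(n+1)) w| :=
            abs_sub_abs_le_abs_sub _ _
          have h2 : |η (a + (k:ℝ)/2^(n+1)) w - η (a + ((2*q:ℕ):ℝ)/2^(n+1)) w| <
              c*a/(4*((n:ℝ)+1)^2) := by
            have : a + (((2*q:ℕ):ℝ) + 1)/2^(n+1) = a + (k:ℝ)/2^(n+1) := by
              rw [hpt1]
            rw [← this]
            push_cast
            push_cast at hincr
            convert hincr using 4 <;> ring
          linarith
        refine habs.trans ?_
        rw [hptq]
        have := ih q hq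
        rw [Finset.sum_range_succ]
        linarith
  obtain ⟨n, k, hk, hck⟩ := hw
  have hsum : ∑ m ∈ Finset.range n, c*a/(4*((m:ℝ)+1)^2) ≤ c*a/2 := by
    have heq : ∑ m ∈ Finset.range n, c*a/(4*((m:ℝ)+1)^2)
        = (c*a/4) * ∑ m ∈ Finset.range n, (1:ℝ)/((m:ℝ)+1)^2 := by
      rw [Finset.mul_sum]
      apply Finset.sum_congr rfl
      intro m _
      field_simp
    rw [heq]
    have := sum_inv_sq_le n
    nlinarith
  have := key n k hk
  have hlt : |η (a + (k:ℝ)/2^n) w| < c * a := by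
    calc |η (a + (k:ℝ)/2^n) w| ≤ |η a w| + ∑ m ∈ Finset.range n, c*a/(4*((m:ℝ)+1)^2) := this
    _ < c*a/2 + c*a/2 := by linarith [h0]
    _ = c*a := by ring
  exact absurd hck (not_le.2 hlt)

lemma interval_bound {W : Type*} [MeasurableSpace W] {P : Measure W}
    [IsProbabilityMeasure P] {η : ℝ → W → ℝ} {κ : ℝ → ℝ}
    (hGP : IsCenteredStationaryGP P η κ) (hA1 : AssumptionA1 κ)
    {c a : ℝ} (hc : 0 < c) (ha : 2 ≤ a) (hca : 16 ≤ c * a) :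
    P {w | ∃ n k : ℕ, k < 2^n ∧ c * a ≤ |η (a + k/2^n) w|} ≤
      ENNReal.ofReal (6 * Real.exp (-(c^2/(256 * max (κ 0) 1) * a^2))) := by
  set V : ℝ := max (κ 0) 1 with hV
  have hV1 : 1 ≤ V := le_max_right _ _
  have hVpos : 0 < V := lt_of_lt_of_le one_pos hV1
  set K₂ : ℝ := c^2/(256 * V) with hK₂
  set γ : ℝ := c^2 * a^2 / 256 with hγ
  have ha0 : (0:ℝ) ≤ a := by linarith
  have hγ1 : 1 ≤ γ := by
    rw [hγ]
    nlinarith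
  have hKγ : K₂ * a^2 ≤ γ := by
    rw [hK₂, hγ]
    rw [div_mul_eq_mul_div, div_le_div_iff₀ (by positivity) (by norm_num)]
    nlinarith [sq_nonneg (c*a)]
  -- single-point bound
  have hB0 : P {w | c*a/2 ≤ |η a w|} ≤ ENNReal.ofReal (2 * Real.exp (-(K₂ * a^2))) := by
    have htail := gaussian_tail (map_single hGP ha0) (u := V) (b := c*a/2) hVpos
      (by rw [Real.coe_toNNReal']
          exact max_le (le_max_left _ _) (le_trans zero_le_one hV1))
      (by positivity)
    refine htail.trans (ENNReal.ofReal_le_ofReal ?_)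
    apply mul_le_mul_of_nonneg_left _ (by norm_num)
    apply Real.exp_le_exp.2
    rw [neg_div, neg_le_neg_iff, hK₂, div_mul_eq_mul_div]
    rw [div_le_div_iff₀ (by positivity) (by positivity)]
    nlinarith [mul_nonneg (mul_nonneg (sq_nonneg c) (sq_nonneg a)) hVpos.le]
  -- increment bounds
  have hBm : ∀ (m : ℕ) (k : Fin (2^(m+1))),
      P {w | c*a/(4*((m:ℝ)+1)^2) ≤
          |η (a + ((k:ℕ)+1)/2^(m+1)) w - η (a + (k:ℕ)/2^(m+1)) w|} ≤
      ENNReal.ofReal (2 * Real.exp (-(2 * γ * ((m:ℝ)+1)^2))) := by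
    intro m k
    have hm1 : (0:ℝ) < (m:ℝ)+1 := by positivity
    have hs₁ : (0:ℝ) ≤ a + ((k:ℕ)+1)/2^(m+1) := by positivity
    have hs₂ : (0:ℝ) ≤ a + ((k:ℕ):ℝ)/2^(m+1) := by positivity
    have hdist : |(a + (((k:ℕ):ℝ)+1)/2^(m+1)) - (a + ((k:ℕ):ℝ)/2^(m+1))| = (2:ℝ)^(-((m+1:ℕ):ℤ)) := by
      rw [show (a + (((k:ℕ):ℝ)+1)/2^(m+1)) - (a + ((k:ℕ):ℝ)/2^(m+1)) = 1/2^(m+1) by ring]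
      rw [abs_of_pos (by positivity)]
      rw [zpow_neg, zpow_natCast]
      rw [one_div]
    -- A1 bound
    have hA := hA1 (m+1) (by omega)
    have hx6 : (((m+1:ℕ)):ℝ)^6 ≤ (κ 0 - κ ((2:ℝ)^(-((m+1:ℕ):ℤ))))⁻¹ := hA
    have hm6pos : (0:ℝ) < (((m+1:ℕ)):ℝ)^6 := by positivity
    have hxpos : 0 < κ 0 - κ ((2:ℝ)^(-((m+1:ℕ):ℤ))) := by
      by_contra hle
      push_neg at hle
      have : (κ 0 - κ ((2:ℝ)^(-((m+1:ℕ):ℤ))))⁻¹ ≤ 0 := inv_nonpos.2 hle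
      linarith
    have hxle : κ 0 - κ ((2:ℝ)^(-((m+1:ℕ):ℤ))) ≤ ((((m+1:ℕ)):ℝ)^6)⁻¹ := by
      rwa [le_inv_comm₀ hm6pos hxpos] at hx6
    set u : ℝ := 2/((m:ℝ)+1)^6 with hu
    have hupos : 0 < u := by positivity
    have hvu : ((2*(κ 0 - κ |(a + (((k:ℕ):ℝ)+1)/2^(m+1)) - (a + ((k:ℕ):ℝ)/2^(m+1))|)).toNNReal : ℝ) ≤ u := by
      rw [Real.coe_toNNReal']
      apply max_le _ hupos.le
      rw [hdist, hu]
      have : (((m+1:ℕ)):ℝ) = (m:ℝ)+1 := by push_cast; ring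
      rw [this] at hxle
      rw [div_eq_mul_inv]
      nlinarith
    have htail := gaussian_tail (map_incr hGP hs₁ hs₂) hupos hvu
      (b := c*a/(4*((m:ℝ)+1)^2)) (div_pos (mul_pos hc (by linarith)) (by positivity))
    have hexp : -(c*a/(4*((m:ℝ)+1)^2))^2/(4*u) = -(2 * γ * ((m:ℝ)+1)^2) := by
      rw [hu, hγ]
      field_simp
      ring
    rw [hexp] at htail
    convert htail using 4
  -- union over k for fixed m
  have hUm : ∀ m : ℕ,
      P (⋃ k : Fin (2^(m+1)), {w | c*a/(4*((m:ℝ)+1)^2) ≤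
          |η (a + ((k:ℕ)+1)/2^(m+1)) w - η (a + (k:ℕ)/2^(m+1)) w|}) ≤
      ENNReal.ofReal (2 * Real.exp (-(γ * ((m:ℝ)+1)))) := by
    intro m
    refine (measure_iUnion_le _).trans ?_
    have hsum : ∑' k : Fin (2^(m+1)), ENNReal.ofReal (2 * Real.exp (-(2 * γ * ((m:ℝ)+1)^2)))
        = ((2^(m+1):ℕ) : ℝ≥0∞) * ENNReal.ofReal (2 * Real.exp (-(2 * γ * ((m:ℝ)+1)^2))) := by
      rw [tsum_fintype]
      rw [Finset.sum_const, Finset.card_univ, Fintype.card_fin, nsmul_eq_mul]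
    calc ∑' k : Fin (2^(m+1)), P _ ≤
        ∑' k : Fin (2^(m+1)), ENNReal.ofReal (2 * Real.exp (-(2 * γ * ((m:ℝ)+1)^2))) :=
          ENNReal.tsum_le_tsum (fun k => hBm m k)
      _ = ((2^(m+1):ℕ) : ℝ≥0∞) * ENNReal.ofReal (2 * Real.exp (-(2 * γ * ((m:ℝ)+1)^2))) := hsum
      _ ≤ ENNReal.ofReal (2 * Real.exp (-(γ * ((m:ℝ)+1)))) := by
          rw [← ENNReal.ofReal_natCast (2^(m+1)), ← ENNReal.ofReal_mul (by positivity)]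
          apply ENNReal.ofReal_le_ofReal
          have hcast : ((2^(m+1):ℕ):ℝ) = (2:ℝ)^(m+1) := by push_cast; ring
          rw [hcast]
          have h2exp : (2:ℝ)^(m+1) = Real.exp (((m:ℝ)+1) * Real.log 2) := by
            rw [show ((m:ℝ)+1) = ((m+1:ℕ):ℝ) by push_cast; ring, Real.exp_nat_mul,
              Real.exp_log (show (0:ℝ) < 2 by norm_num)]
          have hlog2 : Real.log 2 ≤ 1 := by
            have := Real.log_le_sub_one_of_pos (show (0:ℝ) < 2 by norm_num)
            linarith
          have hlog2' : 0 ≤ Real.log 2 := Real.log_nonneg (by norm_num)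
          have hx1 : (1:ℝ) ≤ (m:ℝ)+1 := by linarith [Nat.cast_nonneg (α := ℝ) m]
          have key : (2:ℝ)^(m+1) * Real.exp (-(2*γ*((m:ℝ)+1)^2)) ≤
              Real.exp (-(γ*((m:ℝ)+1))) := by
            rw [h2exp, ← Real.exp_add]
            apply Real.exp_le_exp.2
            have hγ0 : (0:ℝ) ≤ γ := by linarith
            nlinarith [mul_le_mul_of_nonneg_left hlog2 (show (0:ℝ) ≤ (m:ℝ)+1 by positivity),
              mul_le_mul_of_nonneg_right hγ1 (show (0:ℝ) ≤ (m:ℝ)+1 by positivity),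
              mul_le_mul_of_nonneg_left hx1 (mul_nonneg hγ0 (show (0:ℝ) ≤ (m:ℝ)+1 by positivity))]
          calc (2:ℝ)^(m+1) * (2 * Real.exp (-(2*γ*((m:ℝ)+1)^2)))
              = 2 * ((2:ℝ)^(m+1) * Real.exp (-(2*γ*((m:ℝ)+1)^2))) := by ring
            _ ≤ 2 * Real.exp (-(γ*((m:ℝ)+1))) := by linarith [key]
  -- sum over m
  set r : ℝ := Real.exp (-γ) with hr
  have hr0 : 0 ≤ r := Real.exp_nonneg _
  have hr1 : r < 1 := by
    rw [hr, Real.exp_lt_one_iff]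
    linarith
  have hrhalf : r ≤ 1/2 := by
    rw [hr]
    have h1 : Real.exp (-γ) ≤ Real.exp (-1) := Real.exp_le_exp.2 (by linarith)
    refine h1.trans ?_
    rw [Real.exp_neg, inv_le_comm₀ (Real.exp_pos 1) (by norm_num)]
    norm_num
    have := Real.add_one_le_exp (1:ℝ); linarith
  have hterm : ∀ m : ℕ, Real.exp (-(γ * ((m:ℝ)+1))) = r^(m+1) := by
    intro m
    rw [hr, ← Real.exp_nat_mul]
    congr 1
    push_cast
    ring
  have hsummable : Summable (fun m : ℕ => 2 * r^(m+1)) := by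
    apply Summable.mul_left
    exact (summable_geometric_of_lt_one hr0 hr1).comp_injective (add_left_injective 1) |>.congr (fun m => rfl)
  -- sum over m of the union bounds
  have hUsum : P (⋃ (m : ℕ), ⋃ k : Fin (2^(m+1)), {w | c*a/(4*((m:ℝ)+1)^2) ≤
        |η (a + ((k:ℕ)+1)/2^(m+1)) w - η (a + (k:ℕ)/2^(m+1)) w|}) ≤
      ENNReal.ofReal (4 * Real.exp (-(K₂ * a^2))) := by
    refine (measure_iUnion_le _).trans ?_
    have h1 : ∀ m : ℕ, P (⋃ k : Fin (2^(m+1)), {w | c*a/(4*((m:ℝ)+1)^2) ≤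
        |η (a + ((k:ℕ)+1)/2^(m+1)) w - η (a + (k:ℕ)/2^(m+1)) w|}) ≤
        ENNReal.ofReal (2 * r^(m+1)) := by
      intro m
      refine (hUm m).trans_eq ?_
      rw [hterm m]
    refine (ENNReal.tsum_le_tsum h1).trans ?_
    rw [← ENNReal.ofReal_tsum_of_nonneg (fun m => by positivity) hsummable]
    apply ENNReal.ofReal_le_ofReal
    have heq : (fun m : ℕ => 2*r^(m+1)) = fun m : ℕ => (2*r)*r^m := by
      funext m; ring
    rw [heq, tsum_mul_left, tsum_geometric_of_lt_one hr0 hr1]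
    have hinv : (1-r)⁻¹ ≤ 2 := by
      rw [inv_le_comm₀ (by linarith) (by norm_num)]
      linarith
    have h4r : 2*r*(1-r)⁻¹ ≤ 4*r := by
      nlinarith
    refine h4r.trans ?_
    have : r ≤ Real.exp (-(K₂ * a^2)) := by
      rw [hr]
      exact Real.exp_le_exp.2 (by linarith)
    nlinarith [Real.exp_nonneg (-(K₂ * a^2))]
  calc P {w | ∃ n k : ℕ, k < 2^n ∧ c * a ≤ |η (a + k/2^n) w|}
      ≤ P ({w | c*a/2 ≤ |η a w|} ∪
        ⋃ (m : ℕ) (k : Fin (2^(m+1))), {w | c*a/(4*((m:ℝ)+1)^2) ≤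
          |η (a + ((k:ℕ)+1)/2^(m+1)) w - η (a + (k:ℕ)/2^(m+1)) w|}) :=
        measure_mono (chain_incl η a c hc (by linarith))
    _ ≤ P {w | c*a/2 ≤ |η a w|} +
        P (⋃ (m : ℕ) (k : Fin (2^(m+1))), {w | c*a/(4*((m:ℝ)+1)^2) ≤
          |η (a + ((k:ℕ)+1)/2^(m+1)) w - η (a + (k:ℕ)/2^(m+1)) w|}) := measure_union_le _ _
    _ ≤ ENNReal.ofReal (2 * Real.exp (-(K₂ * a^2))) + ENNReal.ofReal (4 * Real.exp (-(K₂ * a^2))) :=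
        add_le_add hB0 hUsum
    _ = ENNReal.ofReal (6 * Real.exp (-(K₂ * a^2))) := by
        rw [← ENNReal.ofReal_add (by positivity) (by positivity)]
        congr 1
        ring

lemma reduce {W : Type*} (η : ℝ → W → ℝ) (d : ℕ) (M τ : ℝ) (hM : 0 < M) (hτ : 2 ≤ τ)
    {w : W} (hcont : ContinuousOn (fun t => η t w) (Set.Ici 0))
    (hw : ENNReal.ofReal M ≤ ⨆ t : {s : ℝ // τ ≤ s}, (‖η (t : ℝ) w * hfun d (t : ℝ)‖₊ : ℝ≥0∞)) :
    ∃ j : ℕ, ∃ n k : ℕ, k < 2^n ∧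
      M / (4*((d:ℝ)+1)) * (τ + (j:ℝ)) ≤ |η ((τ + (j:ℝ)) + (k:ℝ)/2^n) w| := by
  set c : ℝ := M / (4*((d:ℝ)+1)) with hc
  have hcpos : 0 < c := by
    rw [hc]; positivity
  -- find a point with value > M/2
  have h2 : ENNReal.ofReal (M/2) < ⨆ t : {s : ℝ // τ ≤ s}, (‖η (t : ℝ) w * hfun d (t : ℝ)‖₊ : ℝ≥0∞) :=
    lt_of_lt_of_le ((ENNReal.ofReal_lt_ofReal_iff hM).2 (by linarith)) hw
  rw [lt_iSup_iff] at h2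
  obtain ⟨⟨t, ht⟩, hlt⟩ := h2
  rw [← enorm_eq_nnnorm, Real.enorm_eq_ofReal_abs] at hlt
  have htval : M/2 < |η t w * hfun d t| :=
    (ENNReal.ofReal_lt_ofReal_iff_of_nonneg (by linarith)).1 hlt
  -- dyadic approximating sequence from above
  set u : ℕ → ℝ := fun n => τ + ((⌈(t - τ) * 2^n⌉₊ : ℝ))/2^n with hu
  have htau_t : 0 ≤ t - τ := by linarith
  have hule : ∀ n, t ≤ u n := by
    intro n
    rw [hu]
    have h1 := Nat.le_ceil ((t - τ) * 2^n)
    have h2 : t - τ ≤ ((⌈(t - τ) * 2^n⌉₊ : ℝ))/2^n := by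
      rw [le_div_iff₀ (by positivity)]
      exact h1
    simp only
    linarith
  have huge : ∀ n, u n ≤ t + (1/2)^n := by
    intro n
    rw [hu]
    have h1 := Nat.ceil_lt_add_one (by positivity : (0:ℝ) ≤ (t - τ) * 2^n)
    have h2 : ((⌈(t - τ) * 2^n⌉₊ : ℝ))/2^n ≤ (t - τ) + 1/2^n := by
      rw [div_le_iff₀ (by positivity)]
      have : ((t:ℝ) - τ + 1/2^n) * 2^n = (t - τ) * 2^n + 1 := by
        field_simp
      rw [this]
      linarith
    simp only
    have : ((1:ℝ)/2)^n = 1/2^n := by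
      rw [div_pow, one_pow]
    rw [this]
    linarith
  have htend : Tendsto u atTop (𝓝 t) := by
    have hup : Tendsto (fun n : ℕ => t + (1/2)^n) atTop (𝓝 (t + 0)) :=
      tendsto_const_nhds.add (tendsto_pow_atTop_nhds_zero_of_lt_one (by norm_num) (by norm_num))
    rw [add_zero] at hup
    exact tendsto_of_tendsto_of_tendsto_of_le_of_le tendsto_const_nhds hup hule huge
  -- continuity of F at t
  set F : ℝ → ℝ := fun x => η x w * hfun d x with hF
  have hFc : ContinuousWithinAt F (Set.Ici 0) t := by
    have hη : ContinuousWithinAt (fun x => η x w) (Set.Ici 0) t :=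
      hcont t (by simp only [Set.mem_Ici]; linarith)
    exact hη.mul (hfun_continuousAt (by linarith : (1:ℝ) < t)).continuousWithinAt
  have htendF : Tendsto (fun n => F (u n)) atTop (𝓝 (F t)) := by
    apply hFc.tendsto.comp
    rw [tendsto_nhdsWithin_iff]
    refine ⟨htend, ?_⟩
    filter_upwards with n
    simp only [Set.mem_Ici]
    have := hule n
    linarith
  have htendFabs : Tendsto (fun n => |F (u n)|) atTop (𝓝 (|F t|)) := htendF.abs
  have hev : ∀ᶠ n in atTop, M/2 < |F (u n)| := htendFabs.eventually_const_lt htval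
  obtain ⟨N, hN⟩ := hev.exists
  -- decompose the dyadic point
  set K : ℕ := ⌈(t - τ) * 2^N⌉₊ with hK
  set j : ℕ := K / 2^N with hj
  set k : ℕ := K % 2^N with hk
  have hklt : k < 2^N := Nat.mod_lt _ (by positivity)
  have hKeq : (K:ℝ) = 2^N * (j:ℝ) + (k:ℝ) := by
    rw [hj, hk]
    exact_mod_cast (Nat.div_add_mod K (2^N)).symm
  have hpteq : u N = (τ + (j:ℝ)) + (k:ℝ)/2^N := by
    rw [hu]
    simp only
    rw [hKeq]
    field_simp
    ring
  refine ⟨j, N, k, hklt, ?_⟩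
  -- derive the bound at t' := u N
  set t' : ℝ := u N with ht'
  have ht'ge : τ ≤ t' := le_trans ht (hule N)
  have ht'2 : 2 ≤ t' := le_trans hτ ht'ge
  have ht'1 : (1:ℝ) < t' := by linarith
  set Dt : ℝ := t' + Real.log (1 - Real.exp (-t')) with hDt
  have hDpos : 0 < Dt := denom_pos ht'1.le
  have hDge : t'/2 ≤ Dt := by
    have := log_one_sub_exp_ge ht'2
    rw [hDt]
    linarith
  have habs : M/2 < |η t' w| * hfun d t' := by
    have := hN
    rw [hF] at this
    simp only at this
    rwa [abs_mul, abs_of_pos (hfun_pos ht'1)] at this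
  have hfeq : hfun d t' = ((d:ℝ)+1) / Dt := hfun_eq_of_gt ht'1
  have hd1 : (0:ℝ) < (d:ℝ)+1 := by positivity
  have hstep : M/2 * Dt < |η t' w| * ((d:ℝ)+1) := by
    rw [hfeq] at habs
    have h' := mul_lt_mul_of_pos_right habs hDpos
    rwa [mul_assoc, div_mul_cancel₀ _ (ne_of_gt hDpos)] at h'
  have hkey : c * t' < |η t' w| := by
    have h2 : c*t'*((d:ℝ)+1) = M/2*(t'/2) := by
      rw [hc]; field_simp; ring
    have h3 : M/2 * (t'/2) ≤ M/2 * Dt :=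
      mul_le_mul_of_nonneg_left hDge (by linarith)
    have h4 : c*t'*((d:ℝ)+1) < |η t' w| * ((d:ℝ)+1) := by
      rw [h2]; linarith
    exact lt_of_mul_lt_mul_right h4 hd1.le
  have htj : τ + (j:ℝ) ≤ t' := by
    rw [hpteq]
    have : (0:ℝ) ≤ (k:ℝ)/2^N := by positivity
    linarith
  rw [← hpteq]
  have : c * (τ + (j:ℝ)) ≤ c * t' := mul_le_mul_of_nonneg_left htj hcpos.le
  linarith

end Aux
lemma summable_tail {K₂ : ℝ} (hK : 0 < K₂) {τ : ℝ} (hτ : 0 ≤ τ) (A : ℝ) :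
    Summable (fun j : ℕ => A * Real.exp (-(K₂ * (τ + (j:ℝ))^2))) := by
  apply Summable.mul_left
  refine Summable.of_nonneg_of_le (fun j => Real.exp_nonneg _) ?_
    (summable_geometric_of_lt_one (Real.exp_nonneg (-K₂)) (Real.exp_lt_one_iff.2 (by linarith)))
  intro j
  rw [← Real.exp_nat_mul]
  apply Real.exp_le_exp.2
  have hj : (j:ℝ) ≤ (j:ℝ)^2 := by
    exact_mod_cast Nat.le_self_pow two_ne_zero j
  have hj0 : (0:ℝ) ≤ (j:ℝ) := Nat.cast_nonneg _
  nlinarith [mul_nonneg hτ hj0, sq_nonneg τ, mul_nonneg (mul_nonneg hK.le hτ) hj0]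

/-- Tail bound for the weighted supremum of a centered stationary Gaussian process satisfying
(A1): there are `τ* > 1` and constants `K₁, K₂ > 0` (depending only on `d`, `M`, `κ`) such that
for all `τ > τ*`, `P(sup_{t ≥ τ} |η(t) h_d(t)| ≥ M) ≤ ∑_{j≥0} K₁ exp(-K₂ (τ+j)²)`, and the
bound tends to `0` as `τ → ∞`. -/
theorem gp_weighted_tail_sup_bound
    {d : ℕ} (hd1 : 1 ≤ d)
    {W : Type*} [MeasurableSpace W] (P : Measure W) [IsProbabilityMeasure P]
    (η : ℝ → W → ℝ) (κ : ℝ → ℝ)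
    (hGP : IsCenteredStationaryGP P η κ)
    (hA1 : AssumptionA1 κ)
    (M : ℝ) (hM : 0 < M) :
    ∃ τstar > (1:ℝ), ∃ K₁ > (0:ℝ), ∃ K₂ > (0:ℝ),
      (∀ τ : ℝ, τstar < τ →
        P {w | ENNReal.ofReal M ≤
            ⨆ t : {s : ℝ // τ ≤ s}, (‖η (t : ℝ) w * hfun d (t : ℝ)‖₊ : ℝ≥0∞)} ≤
          ENNReal.ofReal (∑' j : ℕ, K₁ * Real.exp (-K₂ * (τ + j)^2))) ∧
      Tendsto (fun τ : ℝ => ∑' j : ℕ, K₁ * Real.exp (-K₂ * (τ + j)^2)) atTop (𝓝 0) := by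
  set c : ℝ := M / (4*((d:ℝ)+1)) with hc
  have hcpos : 0 < c := by rw [hc]; positivity
  set V : ℝ := max (κ 0) 1 with hV
  have hVpos : (0:ℝ) < V := lt_of_lt_of_le one_pos (le_max_right _ _)
  set K₂ : ℝ := c^2/(256*V) with hK₂
  have hK₂pos : 0 < K₂ := div_pos (pow_pos hcpos 2) (by positivity)
  refine ⟨max 2 (16/c), lt_of_lt_of_le one_lt_two (le_max_left _ _), 6, by norm_num,
    K₂, hK₂pos, ?_, ?_⟩
  · -- the tail bound
    intro τ hτ
    simp only [neg_mul]
    have hτ2 : 2 ≤ τ := le_trans (le_max_left _ _) hτ.le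
    have hτc : 16/c ≤ τ := le_trans (le_max_right _ _) hτ.le
    have hτ0 : (0:ℝ) ≤ τ := by linarith
    have ha2 : ∀ j : ℕ, 2 ≤ τ + (j:ℝ) := by
      intro j
      have : (0:ℝ) ≤ (j:ℝ) := Nat.cast_nonneg _
      linarith
    have hca : ∀ j : ℕ, 16 ≤ c * (τ + (j:ℝ)) := by
      intro j
      have h0 : (0:ℝ) ≤ (j:ℝ) := Nat.cast_nonneg _
      have h1 : 16/c ≤ τ + (j:ℝ) := by linarith
      calc (16:ℝ) = c * (16/c) := by field_simp
        _ ≤ c * (τ + (j:ℝ)) := mul_le_mul_of_nonneg_left h1 hcpos.le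
    have hincl : {w | ENNReal.ofReal M ≤
          ⨆ t : {s : ℝ // τ ≤ s}, (‖η (t : ℝ) w * hfun d (t : ℝ)‖₊ : ℝ≥0∞)} ⊆
        {w | ¬ ContinuousOn (fun t => η t w) (Set.Ici 0)} ∪
        ⋃ j : ℕ, {w | ∃ n k : ℕ, k < 2^n ∧
          c * (τ + (j:ℝ)) ≤ |η ((τ + (j:ℝ)) + (k:ℝ)/2^n) w|} := by
      intro w hw
      by_cases hcw : ContinuousOn (fun t => η t w) (Set.Ici 0)
      · right
        obtain ⟨j, n, k, hk, hb⟩ := reduce η d M τ hM hτ2 hcw hw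
        exact Set.mem_iUnion.2 ⟨j, ⟨n, k, hk, hb⟩⟩
      · left; exact hcw
    have hnull : P {w | ¬ ContinuousOn (fun t => η t w) (Set.Ici 0)} = 0 := by
      have := hGP.1
      rwa [MeasureTheory.ae_iff] at this
    have hsummable : Summable (fun j : ℕ => 6 * Real.exp (-(K₂ * (τ + (j:ℝ))^2))) :=
      summable_tail hK₂pos hτ0 6
    calc P {w | ENNReal.ofReal M ≤
          ⨆ t : {s : ℝ // τ ≤ s}, (‖η (t : ℝ) w * hfun d (t : ℝ)‖₊ : ℝ≥0∞)}
        ≤ P ({w | ¬ ContinuousOn (fun t => η t w) (Set.Ici 0)} ∪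
            ⋃ j : ℕ, {w | ∃ n k : ℕ, k < 2^n ∧
              c * (τ + (j:ℝ)) ≤ |η ((τ + (j:ℝ)) + (k:ℝ)/2^n) w|}) := measure_mono hincl
      _ ≤ P {w | ¬ ContinuousOn (fun t => η t w) (Set.Ici 0)} +
            P (⋃ j : ℕ, {w | ∃ n k : ℕ, k < 2^n ∧
              c * (τ + (j:ℝ)) ≤ |η ((τ + (j:ℝ)) + (k:ℝ)/2^n) w|}) := measure_union_le _ _
      _ = P (⋃ j : ℕ, {w | ∃ n k : ℕ, k < 2^n ∧
              c * (τ + (j:ℝ)) ≤ |η ((τ + (j:ℝ)) + (k:ℝ)/2^n) w|}) := by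
            rw [hnull, zero_add]
      _ ≤ ∑' j : ℕ, P {w | ∃ n k : ℕ, k < 2^n ∧
              c * (τ + (j:ℝ)) ≤ |η ((τ + (j:ℝ)) + (k:ℝ)/2^n) w|} := measure_iUnion_le _
      _ ≤ ∑' j : ℕ, ENNReal.ofReal (6 * Real.exp (-(K₂ * (τ + (j:ℝ))^2))) := by
            apply ENNReal.tsum_le_tsum
            intro j
            exact interval_bound hGP hA1 hcpos (ha2 j) (hca j)
      _ = ENNReal.ofReal (∑' j : ℕ, 6 * Real.exp (-(K₂ * (τ + (j:ℝ))^2))) :=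
            (ENNReal.ofReal_tsum_of_nonneg (fun j => by positivity) hsummable).symm
  · -- the limit
    simp only [neg_mul]
    set q : ℝ := Real.exp (-K₂) with hq
    have hq0 : 0 ≤ q := Real.exp_nonneg _
    have hq1 : q < 1 := Real.exp_lt_one_iff.2 (by linarith)
    set C : ℝ := 6 * (1-q)⁻¹ with hC
    have hC0 : 0 ≤ C := by
      rw [hC]
      have : (0:ℝ) < 1 - q := by linarith
      positivity
    apply squeeze_zero' (f := fun τ : ℝ => ∑' j : ℕ, 6 * Real.exp (-(K₂ * (τ + (j:ℝ))^2)))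
      (g := fun τ : ℝ => C * Real.exp (-(K₂ * τ^2)))
    · filter_upwards with τ
      exact tsum_nonneg (fun j => by positivity)
    · filter_upwards [eventually_ge_atTop (0:ℝ)] with τ hτ0
      have hterm : ∀ j : ℕ, 6 * Real.exp (-(K₂ * (τ + (j:ℝ))^2)) ≤
          (6 * Real.exp (-(K₂ * τ^2))) * q^j := by
        intro j
        rw [hq, ← Real.exp_nat_mul, mul_assoc, ← Real.exp_add]
        apply mul_le_mul_of_nonneg_left _ (by norm_num)
        apply Real.exp_le_exp.2
        have hj : (j:ℝ) ≤ (j:ℝ)^2 := by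
          exact_mod_cast Nat.le_self_pow two_ne_zero j
        have hj0 : (0:ℝ) ≤ (j:ℝ) := Nat.cast_nonneg _
        nlinarith [mul_nonneg (mul_nonneg hK₂pos.le hτ0) hj0]
      have hsum1 : Summable (fun j : ℕ => 6 * Real.exp (-(K₂ * (τ + (j:ℝ))^2))) :=
        summable_tail hK₂pos hτ0 6
      have hsum2 : Summable (fun j : ℕ => (6 * Real.exp (-(K₂ * τ^2))) * q^j) :=
        (summable_geometric_of_lt_one hq0 hq1).mul_left _
      calc ∑' j : ℕ, 6 * Real.exp (-(K₂ * (τ + (j:ℝ))^2))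
          ≤ ∑' j : ℕ, (6 * Real.exp (-(K₂ * τ^2))) * q^j := Summable.tsum_le_tsum hterm hsum1 hsum2
        _ = (6 * Real.exp (-(K₂ * τ^2))) * (1-q)⁻¹ := by
            rw [tsum_mul_left, tsum_geometric_of_lt_one hq0 hq1]
        _ = C * Real.exp (-(K₂ * τ^2)) := by rw [hC]; ring
    · have h1 : Tendsto (fun τ : ℝ => K₂ * τ^2) atTop atTop :=
        (tendsto_pow_atTop two_ne_zero).const_mul_atTop hK₂pos
      have h2 : Tendsto (fun τ : ℝ => Real.exp (-(K₂ * τ^2))) atTop (𝓝 0) := by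
        have := Real.tendsto_exp_neg_atTop_nhds_zero.comp h1
        exact this
      have h3 := h2.const_mul C
      simpa using h3

end
end
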